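/- arXiv:1308.0217 — 3 statements merged into one kernel-verified Lean document; each statement's English description precedes it below -/
import Mathlib

section
/- Let R be a σ-finite nonnegative measure on Ω and W : Ω → [0,∞) measurable with ∫ e^{−W} dR < ∞. Then for every probability measure P on Ω with ∫ W dP < ∞, H(P|R) = sup{ ∫ u dP − log ∫ e^u dR : u measurable with sup_Ω |u|/(1+W) < ∞ }. -/
open MeasureTheory
open scoped Classical

/-- Relative entropy `H(P|S) = ∫ log(dP/dS) dP ∈ (-∞,∞]` between (probability) measures,
`+∞` if `P` is not absolutely continuous w.r.t. `S` or `log(dP/dS)` is not `P`-integrable. -/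
noncomputable def relEnt {Ω : Type*} [MeasurableSpace Ω] (P S : Measure Ω) : EReal :=
  if P ≪ S ∧ Integrable (llr P S) P then ((∫ ω, llr P S ω ∂P : ℝ) : EReal) else ⊤

/-- The normalizing constant `z_W = ∫ e^{-W} dR`. -/
noncomputable def zW {Ω : Type*} [MeasurableSpace Ω] (R : Measure Ω) (W : Ω → ℝ) : ENNReal :=
  lintegral R (fun ω => ENNReal.ofReal (Real.exp (-W ω)))

/-- The tilted probability measure `R_W = z_W⁻¹ e^{-W}·R`. -/
noncomputable def tiltedPM {Ω : Type*} [MeasurableSpace Ω] (R : Measure Ω) (W : Ω → ℝ) :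
    Measure Ω :=
  (zW R W)⁻¹ • R.withDensity (fun ω => ENNReal.ofReal (Real.exp (-W ω)))

/-- Relative entropy with respect to a possibly unbounded (σ-finite) reference measure `R`,
defined through the tilting function `W` by `H(P|R) := H(P|R_W) - ∫ W dP - log z_W`. -/
noncomputable def relEntSF {Ω : Type*} [MeasurableSpace Ω] (R : Measure Ω) (W : Ω → ℝ)
    (P : Measure Ω) : EReal :=
  relEnt P (tiltedPM R W) - ((∫ ω, W ω ∂P : ℝ) : EReal)
    - ((Real.log (zW R W).toReal : ℝ) : EReal)


section DVaux

open Real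
open scoped ENNReal

variable {Ω : Type*} [MeasurableSpace Ω]

/-- Jensen: exp of integral ≤ lintegral of exp. -/
lemma DV.jensen (P : Measure Ω) [IsProbabilityMeasure P] {f : Ω → ℝ} (hf : Integrable f P) :
    ENNReal.ofReal (exp (∫ ω, f ω ∂P)) ≤ ∫⁻ ω, ENNReal.ofReal (exp (f ω)) ∂P := by
  by_cases htop : (∫⁻ ω, ENNReal.ofReal (exp (f ω)) ∂P) = ⊤
  · simp [htop]
  have hint : Integrable (fun ω => exp (f ω)) P := by
    refine ⟨(Real.continuous_exp.comp_aestronglyMeasurable hf.1), ?_⟩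
    rw [hasFiniteIntegral_iff_ofReal (ae_of_all _ fun ω => (exp_pos _).le)]
    exact lt_top_iff_ne_top.2 htop
  have h1 : (∫⁻ ω, ENNReal.ofReal (exp (f ω)) ∂P) = ENNReal.ofReal (∫ ω, exp (f ω) ∂P) :=
    (ofReal_integral_eq_lintegral_ofReal hint (ae_of_all _ fun ω => (exp_pos _).le)).symm
  rw [h1]
  refine ENNReal.ofReal_le_ofReal ?_
  exact convexOn_exp.map_integral_le continuous_exp.continuousOn isClosed_univ
    (ae_of_all _ fun _ => Set.mem_univ _) hf (hint.congr (ae_of_all _ fun ω => rfl))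

/-- Measure change: for `P ≪ Q`, `∫⁻ e^{v - llr} dP ≤ ∫⁻ e^v dQ`. -/
lemma DV.change (P Q : Measure Ω) [IsFiniteMeasure P] [IsFiniteMeasure Q] (hPQ : P ≪ Q)
    {v : Ω → ℝ} (hv : Measurable v) :
    ∫⁻ ω, ENNReal.ofReal (exp (v ω - llr P Q ω)) ∂P
      ≤ ∫⁻ ω, ENNReal.ofReal (exp (v ω)) ∂Q := by
  set ρ := P.rnDeriv Q with hρ
  have hρm : Measurable ρ := Measure.measurable_rnDeriv P Q
  have hPd : P = Q.withDensity ρ := (Measure.withDensity_rnDeriv_eq P Q hPQ).symm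
  set F : Ω → ℝ≥0∞ := fun ω => ENNReal.ofReal (exp (v ω - llr P Q ω)) with hF
  have hFm : Measurable F := (hv.sub (measurable_llr P Q)).exp.ennreal_ofReal
  have hint : ∫⁻ ω, F ω ∂P = ∫⁻ ω, ρ ω * F ω ∂Q := by
    rw [hPd, lintegral_withDensity_eq_lintegral_mul _ hρm hFm]
    simp [Pi.mul_apply]
  rw [hint]
  refine lintegral_mono_ae ?_
  filter_upwards [Measure.rnDeriv_lt_top P Q] with ω hlt
  by_cases h0 : ρ ω = 0
  · simp [h0]
  · have htR : 0 < (ρ ω).toReal := ENNReal.toReal_pos h0 hlt.ne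
    have : (ρ ω) = ENNReal.ofReal ((ρ ω).toReal) := (ENNReal.ofReal_toReal hlt.ne).symm
    rw [this, ← ENNReal.ofReal_mul htR.le]
    refine ENNReal.ofReal_le_ofReal ?_
    rw [llr]
    rw [sub_eq_add_neg, exp_add, exp_neg, exp_log htR]
    rw [mul_comm]
    rw [mul_assoc, inv_mul_cancel₀ htR.ne', mul_one]

/-- Per-element upper bound in Donsker-Varadhan. -/
lemma DV.upper (P Q : Measure Ω) [IsProbabilityMeasure P] [IsProbabilityMeasure Q]
    (hPQ : P ≪ Q) (hllr : Integrable (llr P Q) P)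
    {v : Ω → ℝ} (hv : Measurable v) (hvi : Integrable v P) :
    ((∫ ω, v ω ∂P : ℝ) : EReal) - ENNReal.log (∫⁻ ω, ENNReal.ofReal (exp (v ω)) ∂Q)
      ≤ ((∫ ω, llr P Q ω ∂P : ℝ) : EReal) := by
  have key : ENNReal.ofReal (exp (∫ ω, (v ω - llr P Q ω) ∂P))
      ≤ ∫⁻ ω, ENNReal.ofReal (exp (v ω)) ∂Q :=
    le_trans (DV.jensen P (hvi.sub hllr)) (DV.change P Q hPQ hv)
  set L : ENNReal := ∫⁻ ω, ENNReal.ofReal (exp (v ω)) ∂Q with hL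
  have hsub : ∫ ω, (v ω - llr P Q ω) ∂P = ∫ ω, v ω ∂P - ∫ ω, llr P Q ω ∂P :=
    integral_sub hvi hllr
  have hlog : ((∫ ω, v ω ∂P - ∫ ω, llr P Q ω ∂P : ℝ) : EReal) ≤ ENNReal.log L := by
    calc ((∫ ω, v ω ∂P - ∫ ω, llr P Q ω ∂P : ℝ) : EReal)
        = ENNReal.log (ENNReal.ofReal (exp (∫ ω, (v ω - llr P Q ω) ∂P))) := by
          rw [ENNReal.log_ofReal_of_pos (exp_pos _), Real.log_exp, hsub]
      _ ≤ ENNReal.log L := ENNReal.log_monotone key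
  by_cases hMt : ENNReal.log L = ⊤
  · rw [hMt]
    rw [sub_eq_add_neg]
    simp [EReal.add_bot]
  · have hMb : ENNReal.log L ≠ ⊥ := by
      intro h
      rw [h] at hlog
      exact (EReal.coe_ne_bot _) (le_bot_iff.mp hlog)
    obtain ⟨l, hl⟩ : ∃ l : ℝ, ENNReal.log L = (l : EReal) :=
      ⟨(ENNReal.log L).toReal, (EReal.coe_toReal hMt hMb).symm⟩
    rw [hl] at hlog ⊢
    have h1 : (∫ ω, v ω ∂P - ∫ ω, llr P Q ω ∂P : ℝ) ≤ l := by exact_mod_cast hlog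
    rw [← EReal.coe_sub]
    exact_mod_cast (by linarith : (∫ ω, v ω ∂P) - l ≤ ∫ ω, llr P Q ω ∂P)

/-- Negative part of llr is integrable. -/
lemma DV.llr_neg_int (P Q : Measure Ω) [IsProbabilityMeasure P] [IsProbabilityMeasure Q]
    (hPQ : P ≪ Q) : Integrable (fun ω => max (-(llr P Q ω)) 0) P := by
  set ρ := P.rnDeriv Q with hρ
  have hρm : Measurable ρ := Measure.measurable_rnDeriv P Q
  have hgm : Measurable (fun ω => max (-(llr P Q ω)) 0) :=
    (measurable_llr P Q).neg.max measurable_const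
  refine ⟨hgm.aestronglyMeasurable, ?_⟩
  rw [hasFiniteIntegral_iff_ofReal (f := fun ω => max (-(llr P Q ω)) 0)
    (ae_of_all _ fun ω => le_max_right _ _)]
  set F : Ω → ℝ≥0∞ := fun ω => ENNReal.ofReal (max (-(llr P Q ω)) 0) with hF
  have hFm : Measurable F := hgm.ennreal_ofReal
  have hPd : P = Q.withDensity ρ := (Measure.withDensity_rnDeriv_eq P Q hPQ).symm
  have hint : ∫⁻ ω, F ω ∂P = ∫⁻ ω, ρ ω * F ω ∂Q := by
    rw [hPd, lintegral_withDensity_eq_lintegral_mul _ hρm hFm]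
    simp [Pi.mul_apply]
  have hbd : ∀ᵐ ω ∂Q, ρ ω * F ω ≤ 1 := by
    filter_upwards [Measure.rnDeriv_lt_top P Q] with ω hlt
    by_cases h0 : ρ ω = 0
    · simp [h0]
    · have htR : 0 < (ρ ω).toReal := ENNReal.toReal_pos h0 hlt.ne
      set t := (ρ ω).toReal with ht
      have hρt : ρ ω = ENNReal.ofReal t := (ENNReal.ofReal_toReal hlt.ne).symm
      have hreal : t * max (-(llr P Q ω)) 0 ≤ 1 := by
        rw [llr, ← ht]
        rcases le_or_gt 1 t with h1 | h1
        · have : Real.log t ≥ 0 := Real.log_nonneg h1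
          rw [max_eq_right (by linarith)]
          simp
        · have hmax : max (-(Real.log t)) 0 = -(Real.log t) := by
            rw [max_eq_left]
            have : Real.log t ≤ 0 := Real.log_nonpos htR.le h1.le
            linarith
          rw [hmax]
          have hlog : -Real.log t ≤ t⁻¹ := by
            rw [← Real.log_inv]
            have := Real.log_le_sub_one_of_pos (inv_pos.mpr htR)
            linarith
          calc t * (-Real.log t) ≤ t * t⁻¹ := by
                exact mul_le_mul_of_nonneg_left hlog htR.le
            _ = 1 := mul_inv_cancel₀ htR.ne'
      calc ρ ω * F ω = ENNReal.ofReal (t * max (-(llr P Q ω)) 0) := by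
            rw [hρt, hF, ← ENNReal.ofReal_mul htR.le]
        _ ≤ ENNReal.ofReal 1 := ENNReal.ofReal_le_ofReal hreal
        _ = 1 := ENNReal.ofReal_one
  calc ∫⁻ ω, F ω ∂P = ∫⁻ ω, ρ ω * F ω ∂Q := hint
    _ ≤ ∫⁻ _, 1 ∂Q := lintegral_mono_ae hbd
    _ = 1 := by simp
    _ < ⊤ := ENNReal.one_lt_top

/-- The truncated llr test functions. -/
noncomputable def DV.trunc (P Q : Measure Ω) (n : ℕ) (ω : Ω) : ℝ :=
  if 0 < P.rnDeriv Q ω then max (min (llr P Q ω) n) (-(n : ℝ)) else -(n : ℝ)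

lemma DV.trunc_meas (P Q : Measure Ω) (n : ℕ) : Measurable (DV.trunc P Q n) := by
  refine Measurable.ite ?_ (((measurable_llr P Q).min measurable_const).max measurable_const)
    measurable_const
  exact measurableSet_lt measurable_const (Measure.measurable_rnDeriv P Q)

lemma DV.trunc_abs_le (P Q : Measure Ω) (n : ℕ) (ω : Ω) : |DV.trunc P Q n ω| ≤ n := by
  rw [DV.trunc, abs_le]
  split_ifs with h
  · constructor
    · exact le_max_right _ _
    · exact max_le (min_le_right _ _) (neg_le_self n.cast_nonneg)
  · exact ⟨le_rfl, neg_le_self n.cast_nonneg⟩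

lemma DV.lint_exp_trunc_le (P Q : Measure Ω) [IsProbabilityMeasure P] [IsProbabilityMeasure Q]
    (n : ℕ) :
    ∫⁻ ω, ENNReal.ofReal (exp (DV.trunc P Q n ω)) ∂Q
      ≤ ENNReal.ofReal (1 + exp (-(n : ℝ))) := by
  set ρ := P.rnDeriv Q with hρ
  have hbd : ∀ᵐ ω ∂Q, ENNReal.ofReal (exp (DV.trunc P Q n ω))
      ≤ ρ ω + ENNReal.ofReal (exp (-(n : ℝ))) := by
    filter_upwards [Measure.rnDeriv_lt_top P Q] with ω hlt
    rw [DV.trunc]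
    split_ifs with h
    · have htR : 0 < (ρ ω).toReal := ENNReal.toReal_pos h.ne' hlt.ne
      have h1 : exp (max (min (llr P Q ω) n) (-(n:ℝ))) ≤ (ρ ω).toReal + exp (-(n:ℝ)) := by
        rcases max_cases (min (llr P Q ω) n) (-(n:ℝ)) with ⟨heq, _⟩ | ⟨heq, _⟩
        · rw [heq]
          have : exp (min (llr P Q ω) n) ≤ (ρ ω).toReal := by
            calc exp (min (llr P Q ω) n) ≤ exp (llr P Q ω) := by
                  exact exp_le_exp.mpr (min_le_left _ _)
              _ = (ρ ω).toReal := by rw [llr, exp_log htR]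
          linarith [exp_pos (-(n:ℝ))]
        · rw [heq]
          linarith [ENNReal.toReal_nonneg (a := ρ ω)]
      calc ENNReal.ofReal (exp (max (min (llr P Q ω) n) (-(n:ℝ))))
          ≤ ENNReal.ofReal ((ρ ω).toReal + exp (-(n:ℝ))) := ENNReal.ofReal_le_ofReal h1
        _ ≤ ENNReal.ofReal ((ρ ω).toReal) + ENNReal.ofReal (exp (-(n:ℝ))) :=
            ENNReal.ofReal_add_le
        _ ≤ ρ ω + ENNReal.ofReal (exp (-(n:ℝ))) := by
            gcongr
            exact ENNReal.ofReal_toReal_le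
    · exact le_add_self.trans_eq' rfl
  calc ∫⁻ ω, ENNReal.ofReal (exp (DV.trunc P Q n ω)) ∂Q
      ≤ ∫⁻ ω, (ρ ω + ENNReal.ofReal (exp (-(n:ℝ)))) ∂Q := lintegral_mono_ae hbd
    _ = (∫⁻ ω, ρ ω ∂Q) + ENNReal.ofReal (exp (-(n:ℝ))) := by
        rw [lintegral_add_right _ measurable_const, lintegral_const, measure_univ, mul_one]
    _ ≤ 1 + ENNReal.ofReal (exp (-(n:ℝ))) := by
        gcongr
        calc ∫⁻ ω, ρ ω ∂Q ≤ P Set.univ := Measure.lintegral_rnDeriv_le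
          _ = 1 := measure_univ
    _ = ENNReal.ofReal (1 + exp (-(n:ℝ))) := by
        rw [ENNReal.ofReal_add (by norm_num) (exp_pos _).le, ENNReal.ofReal_one]

lemma DV.integrable_of_bound (P : Measure Ω) [IsProbabilityMeasure P] {W v : Ω → ℝ}
    (hWP : Integrable W P) (hv : Measurable v) {c : ℝ} (hc : ∀ ω, |v ω| ≤ c * (1 + W ω)) :
    Integrable v P := by
  have hg : Integrable (fun ω => c * (1 + W ω)) P :=
    ((integrable_const (1 : ℝ)).add hWP).const_mul c
  exact hg.mono' hv.aestronglyMeasurable (ae_of_all _ fun ω => hc ω)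

lemma DV.abs_max_min (a nr : ℝ) (hn : 0 ≤ nr) : |max (min a nr) (-nr)| ≤ |a| := by
  rw [abs_le]
  constructor
  · rcases le_or_gt a 0 with h | h
    · have : min a nr = a := min_eq_left (by linarith)
      rw [this]
      calc -|a| = a := by rw [abs_of_nonpos h]; ring
        _ ≤ max a (-nr) := le_max_left _ _
    · have h2 : (0:ℝ) ≤ min a nr := le_min h.le hn
      calc -|a| ≤ 0 := neg_nonpos.mpr (abs_nonneg a)
        _ ≤ min a nr := h2
        _ ≤ max (min a nr) (-nr) := le_max_left _ _
  · refine max_le (le_trans (min_le_left _ _) (le_abs_self a)) ?_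
    calc -nr ≤ 0 := by linarith
      _ ≤ |a| := abs_nonneg a

lemma DV.trunc_integrable (P Q : Measure Ω) [IsProbabilityMeasure P] (n : ℕ) :
    Integrable (DV.trunc P Q n) P := by
  refine (integrable_const (n : ℝ)).mono' (DV.trunc_meas P Q n).aestronglyMeasurable ?_
  exact ae_of_all _ fun ω => by simpa using DV.trunc_abs_le P Q n ω

lemma DV.trunc_mem_ineq (P Q : Measure Ω) [IsProbabilityMeasure P] [IsProbabilityMeasure Q]
    (n : ℕ) :
    ((∫ ω, DV.trunc P Q n ω ∂P - Real.log (1 + exp (-(n:ℝ))) : ℝ) : EReal)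
      ≤ ((∫ ω, DV.trunc P Q n ω ∂P : ℝ) : EReal)
          - ENNReal.log (∫⁻ ω, ENNReal.ofReal (exp (DV.trunc P Q n ω)) ∂Q) := by
  have hlog_le : ENNReal.log (∫⁻ ω, ENNReal.ofReal (exp (DV.trunc P Q n ω)) ∂Q)
      ≤ ((Real.log (1 + exp (-(n:ℝ))) : ℝ) : EReal) := by
    calc ENNReal.log (∫⁻ ω, ENNReal.ofReal (exp (DV.trunc P Q n ω)) ∂Q)
        ≤ ENNReal.log (ENNReal.ofReal (1 + exp (-(n:ℝ)))) :=
          ENNReal.log_monotone (DV.lint_exp_trunc_le P Q n)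
      _ = ((Real.log (1 + exp (-(n:ℝ))) : ℝ) : EReal) := by
          rw [ENNReal.log_ofReal_of_pos (by positivity)]
  rw [EReal.coe_sub]
  exact EReal.sub_le_sub le_rfl hlog_le

noncomputable def relEnt' (P S : Measure Ω) : EReal :=
  if P ≪ S ∧ Integrable (llr P S) P then ((∫ ω, llr P S ω ∂P : ℝ) : EReal) else ⊤

lemma DV.prob (P Q : Measure Ω) [IsProbabilityMeasure P] [IsProbabilityMeasure Q]
    {W : Ω → ℝ} (hW0 : ∀ ω, 0 ≤ W ω) (hWP : Integrable W P) :
    relEnt' P Q = sSup {y : EReal | ∃ v : Ω → ℝ, Measurable v ∧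
        (∃ c : ℝ, ∀ ω, |v ω| ≤ c * (1 + W ω)) ∧
        y = ((∫ ω, v ω ∂P : ℝ) : EReal)
              - ENNReal.log (∫⁻ ω, ENNReal.ofReal (exp (v ω)) ∂Q)} := by
  set S := {y : EReal | ∃ v : Ω → ℝ, Measurable v ∧
        (∃ c : ℝ, ∀ ω, |v ω| ≤ c * (1 + W ω)) ∧
        y = ((∫ ω, v ω ∂P : ℝ) : EReal)
              - ENNReal.log (∫⁻ ω, ENNReal.ofReal (exp (v ω)) ∂Q)} with hSdef
  have hmem : ∀ n : ℕ, (((∫ ω, DV.trunc P Q n ω ∂P : ℝ) : EReal)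
      - ENNReal.log (∫⁻ ω, ENNReal.ofReal (exp (DV.trunc P Q n ω)) ∂Q)) ∈ S := by
    intro n
    refine ⟨DV.trunc P Q n, DV.trunc_meas P Q n, ⟨n, fun ω => ?_⟩, rfl⟩
    calc |DV.trunc P Q n ω| ≤ n := DV.trunc_abs_le P Q n ω
      _ ≤ n * (1 + W ω) := by nlinarith [hW0 ω, (by positivity : (0:ℝ) ≤ (n:ℝ))]
  have hkey : ∀ n : ℕ,
      ((∫ ω, DV.trunc P Q n ω ∂P - Real.log (1 + exp (-(n:ℝ))) : ℝ) : EReal) ≤ sSup S :=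
    fun n => le_trans (DV.trunc_mem_ineq P Q n) (le_sSup (hmem n))
  refine le_antisymm ?_ ?_
  · -- relEnt' ≤ sSup S
    by_cases hac : P ≪ Q
    · by_cases hi : Integrable (llr P Q) P
      · -- finite case
        rw [relEnt', if_pos ⟨hac, hi⟩]
        have htend : Filter.Tendsto (fun n : ℕ => ∫ ω, DV.trunc P Q n ω ∂P)
            Filter.atTop (nhds (∫ ω, llr P Q ω ∂P)) := by
          refine tendsto_integral_of_dominated_convergence (fun ω => |llr P Q ω|)
            (fun n => (DV.trunc_meas P Q n).aestronglyMeasurable) hi.abs ?_ ?_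
          · intro n
            filter_upwards [Measure.rnDeriv_pos hac] with ω hpos
            rw [Real.norm_eq_abs, DV.trunc, if_pos hpos]
            exact DV.abs_max_min _ _ n.cast_nonneg
          · filter_upwards [Measure.rnDeriv_pos hac] with ω hpos
            obtain ⟨N, hN⟩ := exists_nat_ge |llr P Q ω|
            refine tendsto_const_nhds.congr' ?_
            filter_upwards [Filter.eventually_ge_atTop N] with n hn
            have hn' : |llr P Q ω| ≤ n := hN.trans (Nat.cast_le.2 hn)
            rw [DV.trunc, if_pos hpos, min_eq_left (le_trans (le_abs_self _) hn'),
              max_eq_left (le_trans (neg_le_neg hn') (neg_abs_le _))]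
        have h1 : Filter.Tendsto (fun n : ℕ => exp (-(n:ℝ))) Filter.atTop (nhds 0) :=
          Real.tendsto_exp_atBot.comp
            (Filter.tendsto_neg_atTop_atBot.comp tendsto_natCast_atTop_atTop)
        have htend2 : Filter.Tendsto (fun n : ℕ => Real.log (1 + exp (-(n:ℝ))))
            Filter.atTop (nhds 0) := by
          have h2 : Filter.Tendsto (fun n : ℕ => 1 + exp (-(n:ℝ))) Filter.atTop (nhds 1) := by
            simpa using tendsto_const_nhds.add h1
          have h3 := ((Real.continuousAt_log (by norm_num : (1:ℝ) ≠ 0)).tendsto).comp h2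
          simpa [Function.comp_def] using h3
        have hT : Filter.Tendsto
            (fun n : ℕ => ((∫ ω, DV.trunc P Q n ω ∂P - Real.log (1 + exp (-(n:ℝ))) : ℝ) : EReal))
            Filter.atTop (nhds ((∫ ω, llr P Q ω ∂P : ℝ) : EReal)) :=
          EReal.tendsto_coe.2 (by simpa using htend.sub htend2)
        exact le_of_tendsto hT (Filter.Eventually.of_forall hkey)
      · -- llr not integrable
        rw [relEnt', if_neg (fun hh => hi hh.2)]
        rw [top_le_iff, EReal.eq_top_iff_forall_lt]
        intro M
        set g : Ω → ℝ := fun ω => max (llr P Q ω) 0 with hg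
        have hgm : Measurable g := (measurable_llr P Q).max measurable_const
        have hneg := DV.llr_neg_int P Q hac
        have hid : ∀ a : ℝ, max a 0 - max (-a) 0 = a := by
          intro a
          rcases le_total a 0 with h | h
          · rw [max_eq_right h, max_eq_left (by linarith)]; ring
          · rw [max_eq_left h, max_eq_right (by linarith)]; ring
        have htop : ∫⁻ ω, ENNReal.ofReal (g ω) ∂P = ⊤ := by
          by_contra hfin
          apply hi
          have hgint : Integrable g P := by
            refine ⟨hgm.aestronglyMeasurable, ?_⟩
            rw [hasFiniteIntegral_iff_ofReal (f := g) (ae_of_all _ fun ω => le_max_right _ _)]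
            exact lt_top_iff_ne_top.2 hfin
          exact (hgint.sub hneg).congr (ae_of_all _ fun ω => hid (llr P Q ω))
        have hsup : (⨆ n : ℕ, ∫⁻ ω, ENNReal.ofReal (min (g ω) n) ∂P) = ⊤ := by
          rw [← lintegral_iSup (fun n => (hgm.min measurable_const).ennreal_ofReal)
            (fun m n hmn ω => ENNReal.ofReal_le_ofReal
              (min_le_min le_rfl (Nat.cast_le.2 hmn)))]
          rw [← htop]
          refine lintegral_congr fun ω => ?_
          refine le_antisymm (iSup_le fun n => ENNReal.ofReal_le_ofReal (min_le_left _ _)) ?_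
          obtain ⟨n, hn⟩ := exists_nat_ge (g ω)
          exact le_iSup_of_le n (by rw [min_eq_left hn])
        set C : ℝ := |M| + (∫ ω, max (-(llr P Q ω)) 0 ∂P) + Real.log 2 with hC
        have hC0 : 0 ≤ C := by
          have h1 : 0 ≤ ∫ ω, max (-(llr P Q ω)) 0 ∂P :=
            integral_nonneg fun ω => le_max_right _ _
          have h2 : 0 ≤ Real.log 2 := Real.log_nonneg (by norm_num)
          positivity
        have hlt : ENNReal.ofReal C < ⨆ n : ℕ, ∫⁻ ω, ENNReal.ofReal (min (g ω) n) ∂P := by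
          rw [hsup]; exact ENNReal.ofReal_lt_top
        obtain ⟨n, hn⟩ := lt_iSup_iff.mp hlt
        have hne : (∫⁻ ω, ENNReal.ofReal (min (g ω) n) ∂P) ≠ ⊤ := by
          refine ne_top_of_le_ne_top (b := ENNReal.ofReal n) ?_ ?_
          · exact ENNReal.ofReal_ne_top
          · calc ∫⁻ ω, ENNReal.ofReal (min (g ω) n) ∂P
                ≤ ∫⁻ _, ENNReal.ofReal n ∂P := lintegral_mono fun ω =>
                  ENNReal.ofReal_le_ofReal (min_le_right _ _)
              _ = ENNReal.ofReal n := by simp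
        have hmin_nonneg : ∀ ω, 0 ≤ min (g ω) n :=
          fun ω => le_min (le_max_right _ _) n.cast_nonneg
        have hint_min : Integrable (fun ω => min (g ω) n) P := by
          refine (integrable_const (n : ℝ)).mono'
            (hgm.min measurable_const).aestronglyMeasurable (ae_of_all _ fun ω => ?_)
          rw [Real.norm_eq_abs, abs_of_nonneg (hmin_nonneg ω)]
          exact min_le_right _ _
        have heq : ∫ ω, min (g ω) n ∂P = (∫⁻ ω, ENNReal.ofReal (min (g ω) n) ∂P).toReal := by
          rw [integral_eq_lintegral_of_nonneg_ae (ae_of_all _ hmin_nonneg)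
            (hgm.min measurable_const).aestronglyMeasurable]
        have hCint : C < ∫ ω, min (g ω) n ∂P := by
          rw [heq]
          exact (ENNReal.ofReal_lt_iff_lt_toReal hC0 hne).mp hn
        have hlb : ∫ ω, min (g ω) n ∂P - ∫ ω, max (-(llr P Q ω)) 0 ∂P
            ≤ ∫ ω, DV.trunc P Q n ω ∂P := by
          rw [← integral_sub hint_min hneg]
          refine integral_mono_ae (hint_min.sub hneg) (DV.trunc_integrable P Q n) ?_
          filter_upwards [Measure.rnDeriv_pos hac] with ω hpos
          rw [DV.trunc, if_pos hpos]
          rcases le_total (llr P Q ω) 0 with h | h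
          · rw [hg]
            simp only
            rw [max_eq_right h, max_eq_left (by linarith), min_eq_left n.cast_nonneg]
            have hmin : min (llr P Q ω) (n:ℝ) = llr P Q ω := min_eq_left (by
              calc llr P Q ω ≤ 0 := h
                _ ≤ n := n.cast_nonneg)
            calc 0 - -llr P Q ω = llr P Q ω := by ring
              _ = min (llr P Q ω) (n:ℝ) := hmin.symm
              _ ≤ max (min (llr P Q ω) n) (-(n:ℝ)) := le_max_left _ _
          · rw [hg]
            simp only
            rw [max_eq_left h, max_eq_right (by linarith)]
            calc min (llr P Q ω) (n:ℝ) - 0 = min (llr P Q ω) n := by ring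
              _ ≤ max (min (llr P Q ω) n) (-(n:ℝ)) := le_max_left _ _
        have hlog2 : Real.log (1 + exp (-(n:ℝ))) ≤ Real.log 2 := by
          refine Real.log_le_log (by positivity) ?_
          have : exp (-(n:ℝ)) ≤ 1 := by
            rw [← Real.exp_zero]
            exact Real.exp_le_exp.2 (by simp)
          linarith
        have hMlt : M < ∫ ω, DV.trunc P Q n ω ∂P - Real.log (1 + exp (-(n:ℝ))) := by
          have habs : M ≤ |M| := le_abs_self M
          nlinarith [hlb, hCint, hlog2]
        exact lt_of_lt_of_le (EReal.coe_lt_coe_iff.2 hMlt) (hkey n)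
    · -- not absolutely continuous
      rw [relEnt', if_neg (fun hh => hac hh.1)]
      rw [top_le_iff, EReal.eq_top_iff_forall_lt]
      obtain ⟨A, hA, hQA, hPA⟩ : ∃ A, MeasurableSet A ∧ Q A = 0 ∧ P A ≠ 0 := by
        by_contra hcon
        push_neg at hcon
        exact hac (Measure.AbsolutelyContinuous.mk fun s hs hQs => hcon s hs hQs)
      intro M
      have ht : 0 < (P A).toReal :=
        ENNReal.toReal_pos hPA (measure_ne_top P A)
      obtain ⟨n, hn⟩ := exists_nat_gt (M / (P A).toReal)
      have hMn : M < n * (P A).toReal := by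
        rw [div_lt_iff₀ ht] at hn
        linarith
      set v : Ω → ℝ := fun ω => (n:ℝ) * A.indicator (1 : Ω → ℝ) ω with hv
      have hvm : Measurable v := (measurable_const.indicator hA).const_mul (n:ℝ)
      have hbnd : ∀ ω, |v ω| ≤ (n:ℝ) * (1 + W ω) := by
        intro ω
        have h1 : |v ω| ≤ n := by
          rw [hv]
          simp only
          rw [abs_mul, Nat.abs_cast]
          by_cases hω : ω ∈ A
          · rw [Set.indicator_of_mem hω]; simp
          · rw [Set.indicator_of_notMem hω]; simp
        calc |v ω| ≤ n := h1
          _ ≤ n * (1 + W ω) := by nlinarith [hW0 ω, (by positivity : (0:ℝ) ≤ (n:ℝ))]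
      have hIv : ∫ ω, v ω ∂P = n * (P A).toReal := by
        rw [hv]
        simp only
        rw [integral_const_mul, integral_indicator_one hA]; rfl
      have hLv : ∫⁻ ω, ENNReal.ofReal (exp (v ω)) ∂Q = 1 := by
        have hae : ∀ᵐ ω ∂Q, ENNReal.ofReal (exp (v ω)) = 1 := by
          filter_upwards [measure_eq_zero_iff_ae_notMem.mp hQA] with ω hω
          rw [hv]
          simp [Set.indicator_of_notMem hω]
        rw [lintegral_congr_ae hae]
        simp
      have hmemv : (((∫ ω, v ω ∂P : ℝ) : EReal)
          - ENNReal.log (∫⁻ ω, ENNReal.ofReal (exp (v ω)) ∂Q)) ∈ S :=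
        ⟨v, hvm, ⟨n, hbnd⟩, rfl⟩
      have hval : (((∫ ω, v ω ∂P : ℝ) : EReal)
          - ENNReal.log (∫⁻ ω, ENNReal.ofReal (exp (v ω)) ∂Q))
          = ((n * (P A).toReal : ℝ) : EReal) := by
        rw [hLv, hIv]
        simp
      refine lt_of_lt_of_le ?_ (le_sSup hmemv)
      rw [hval]
      exact_mod_cast EReal.coe_lt_coe_iff.2 hMn
  · -- sSup S ≤ relEnt'
    refine sSup_le fun x hx => ?_
    obtain ⟨v, hv, ⟨c, hc⟩, rfl⟩ := hx
    by_cases hcond : P ≪ Q ∧ Integrable (llr P Q) P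
    · rw [relEnt', if_pos hcond]
      exact DV.upper P Q hcond.1 hcond.2 hv (DV.integrable_of_bound P hWP hv hc)
    · rw [relEnt', if_neg hcond]
      exact le_top

lemma DV.sub_sub (x : EReal) (a b : ℝ) : x - (a:EReal) - (b:EReal) = x - (((a+b:ℝ)):EReal) := by
  rw [sub_eq_add_neg, sub_eq_add_neg, sub_eq_add_neg, add_assoc]
  congr 1
  norm_cast
  ring

lemma DV.ereal_arith (p a b : ℝ) {L : EReal} (hL : L ≠ ⊥) :
    ((p : ℝ) : EReal) - ((b : EReal) + L)
      = ((((p + a) : ℝ) : EReal) - L) - (((a + b) : ℝ) : EReal) := by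
  induction L with
  | bot => exact absurd rfl hL
  | coe l =>
      rw [← EReal.coe_add, ← EReal.coe_sub, ← EReal.coe_sub, ← EReal.coe_sub]
      norm_cast
      ring
  | top =>
      rw [EReal.coe_add_top]
      simp only [sub_eq_add_neg, EReal.neg_top, EReal.add_bot, EReal.bot_add]

lemma DV.sSup_sub_const (T : Set EReal) (c : ℝ) :
    sSup ((fun y => y - (c : EReal)) '' T) = sSup T - (c : EReal) := by
  apply le_antisymm
  · refine sSup_le fun x hx => ?_
    obtain ⟨y, hy, rfl⟩ := hx
    exact EReal.sub_le_sub (le_sSup hy) le_rfl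
  · rw [EReal.sub_le_iff_le_add (Or.inl (EReal.coe_ne_bot c)) (Or.inl (EReal.coe_ne_top c))]
    refine sSup_le fun y hy => ?_
    rw [← EReal.sub_le_iff_le_add (Or.inl (EReal.coe_ne_bot c)) (Or.inl (EReal.coe_ne_top c))]
    exact le_sSup ⟨y, hy, rfl⟩

lemma DV.relEnt_eq (P S : Measure Ω) : relEnt P S = relEnt' P S := rfl

lemma DV.tilted_isProb {R : Measure Ω} {W : Ω → ℝ} (hWm : Measurable W)
    (hz0 : zW R W ≠ 0) (hzt : zW R W ≠ ⊤) : IsProbabilityMeasure (tiltedPM R W) := by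
  constructor
  rw [tiltedPM, Measure.smul_apply, withDensity_apply _ MeasurableSet.univ,
    Measure.restrict_univ, smul_eq_mul]
  rw [show (∫⁻ ω, ENNReal.ofReal (Real.exp (-W ω)) ∂ R) = zW R W from rfl]
  exact ENNReal.inv_mul_cancel hz0 hzt

lemma DV.lint_tilted {R : Measure Ω} {W : Ω → ℝ} (hWm : Measurable W)
    {v : Ω → ℝ} (hv : Measurable v) :
    ∫⁻ ω, ENNReal.ofReal (exp (v ω)) ∂(tiltedPM R W)
      = (zW R W)⁻¹ * ∫⁻ ω, ENNReal.ofReal (exp (v ω - W ω)) ∂ R := by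
  rw [tiltedPM, lintegral_smul_measure, smul_eq_mul,
    lintegral_withDensity_eq_lintegral_mul _
      (f := fun ω => ENNReal.ofReal (exp (-W ω))) hWm.neg.exp.ennreal_ofReal
      hv.exp.ennreal_ofReal]
  congr 1
  refine lintegral_congr fun ω => ?_
  rw [Pi.mul_apply, ← ENNReal.ofReal_mul (exp_pos _).le, ← Real.exp_add]
  congr 2
  ring

lemma DV.lint_exp_ne_zero (Q : Measure Ω) [IsProbabilityMeasure Q] {v : Ω → ℝ}
    (hv : Measurable v) : ∫⁻ ω, ENNReal.ofReal (exp (v ω)) ∂Q ≠ 0 := by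
  intro h
  rw [lintegral_eq_zero_iff hv.exp.ennreal_ofReal] at h
  rw [Filter.EventuallyEq, ae_iff] at h
  have huniv : {ω | ¬ ENNReal.ofReal (exp (v ω)) = (0 : Ω → ℝ≥0∞) ω} = Set.univ := by
    refine Set.eq_univ_iff_forall.2 fun ω => ?_
    simp only [Pi.zero_apply, Set.mem_setOf_eq, ENNReal.ofReal_eq_zero, not_le]
    exact exp_pos _
  rw [huniv] at h
  exact (IsProbabilityMeasure.ne_zero Q) (Measure.measure_univ_eq_zero.mp h)

end DVaux

open scoped ENNReal

/-- The variational ("sup") representation of the relative entropy with respect to a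
σ-finite measure `R`, over the class `B_W(Ω)` of measurable functions `u` with
`sup |u|/(1+W) < ∞` : `H(P|R) = sup { ∫ u dP - log ∫ e^u dR }`. -/
theorem relEntSF_eq_sSup_BW
    {Ω : Type*} [MeasurableSpace Ω] (R : Measure Ω) [SigmaFinite R]
    (P : Measure Ω) [IsProbabilityMeasure P]
    (W : Ω → ℝ) (hWm : Measurable W) (hW0 : ∀ ω, 0 ≤ W ω)
    (hzW : zW R W ≠ ⊤) (hWP : Integrable W P) :
    relEntSF R W P =
      sSup { x : EReal | ∃ u : Ω → ℝ, Measurable u ∧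
        (∃ c : ℝ, ∀ ω, |u ω| ≤ c * (1 + W ω)) ∧
        x = ((∫ ω, u ω ∂P : ℝ) : EReal)
              - ENNReal.log (lintegral R (fun ω => ENNReal.ofReal (Real.exp (u ω)))) } := by
  by_cases hz0 : zW R W = 0
  · -- degenerate case: R = 0
    have hR : R = 0 := by
      have h := (lintegral_eq_zero_iff hWm.neg.exp.ennreal_ofReal).mp hz0
      rw [Filter.EventuallyEq, ae_iff] at h
      have huniv : {ω | ¬ ENNReal.ofReal (Real.exp ((-W) ω)) = (0 : Ω → ℝ≥0∞) ω}
          = Set.univ := by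
        refine Set.eq_univ_iff_forall.2 fun ω => ?_
        simp only [Pi.zero_apply, Set.mem_setOf_eq, ENNReal.ofReal_eq_zero, not_le]
        exact Real.exp_pos _
      rw [huniv] at h
      exact Measure.measure_univ_eq_zero.mp h
    have htilt : tiltedPM R W = 0 := by
      refine Measure.ext fun s hs => ?_
      rw [tiltedPM, Measure.smul_apply, withDensity_apply _ hs, hR]
      simp
    have hrel : relEnt P (tiltedPM R W) = ⊤ := by
      rw [relEnt, if_neg]
      rintro ⟨hac, -⟩
      rw [htilt] at hac
      have h0 : P Set.univ = 0 := hac (by simp)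
      rw [measure_univ] at h0
      exact one_ne_zero h0
    have hLHS : relEntSF R W P = ⊤ := by
      rw [relEntSF, hrel, EReal.top_sub_coe, EReal.top_sub_coe]
    rw [hLHS]
    have hmem : (⊤ : EReal) ∈ { x : EReal | ∃ u : Ω → ℝ, Measurable u ∧
        (∃ c : ℝ, ∀ ω, |u ω| ≤ c * (1 + W ω)) ∧
        x = ((∫ ω, u ω ∂P : ℝ) : EReal)
              - ENNReal.log (∫⁻ ω, ENNReal.ofReal (Real.exp (u ω)) ∂ R) } := by
      refine ⟨fun _ => (0:ℝ), measurable_const, ⟨0, fun ω => by simp⟩, ?_⟩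
      rw [hR]
      rw [lintegral_zero_measure, ENNReal.log_zero, integral_zero]
      exact (EReal.coe_sub_bot 0).symm
    exact (top_le_iff.mp (le_sSup hmem)).symm
  · -- main case
    haveI hQprob : IsProbabilityMeasure (tiltedPM R W) := DV.tilted_isProb hWm hz0 hzW
    set aW : ℝ := ∫ ω, W ω ∂P with haW
    set bz : ℝ := Real.log (zW R W).toReal with hbz
    have hbzE : ENNReal.log (zW R W) = ((bz : ℝ) : EReal) :=
      ENNReal.log_pos_real' (ENNReal.toReal_pos hz0 hzW)
    set T := {y : EReal | ∃ v : Ω → ℝ, Measurable v ∧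
        (∃ c : ℝ, ∀ ω, |v ω| ≤ c * (1 + W ω)) ∧
        y = ((∫ ω, v ω ∂P : ℝ) : EReal)
              - ENNReal.log (∫⁻ ω, ENNReal.ofReal (Real.exp (v ω)) ∂(tiltedPM R W))} with hT
    have hST : { x : EReal | ∃ u : Ω → ℝ, Measurable u ∧
        (∃ c : ℝ, ∀ ω, |u ω| ≤ c * (1 + W ω)) ∧
        x = ((∫ ω, u ω ∂P : ℝ) : EReal)
              - ENNReal.log (∫⁻ ω, ENNReal.ofReal (Real.exp (u ω)) ∂ R) }
        = (fun y => y - (((aW + bz : ℝ)) : EReal)) '' T := by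
      ext x
      constructor
      · rintro ⟨u, hu, ⟨c, hc⟩, rfl⟩
        have hui : Integrable u P := DV.integrable_of_bound P hWP hu hc
        have hvm : Measurable (fun ω => u ω + W ω) := hu.add hWm
        have hvb : ∀ ω, |u ω + W ω| ≤ (|c| + 1) * (1 + W ω) := by
          intro ω
          have h1 := hc ω; have h2 := hW0 ω; have h3 := abs_nonneg (u ω)
          have h4 : |u ω + W ω| ≤ |u ω| + W ω :=
            (abs_add_le _ _).trans (by rw [abs_of_nonneg h2])
          nlinarith [le_abs_self c]
        have hIv : ∫ ω, (u ω + W ω) ∂P = ∫ ω, u ω ∂P + aW := integral_add hui hWP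
        have hLu : ∫⁻ ω, ENNReal.ofReal (Real.exp (u ω)) ∂ R
            = zW R W * ∫⁻ ω, ENNReal.ofReal (Real.exp (u ω + W ω)) ∂(tiltedPM R W) := by
          rw [DV.lint_tilted hWm hvm, ← mul_assoc, ENNReal.mul_inv_cancel hz0 hzW, one_mul]
          refine (lintegral_congr fun ω => ?_).symm
          norm_num
        have hLne : ENNReal.log
            (∫⁻ ω, ENNReal.ofReal (Real.exp (u ω + W ω)) ∂(tiltedPM R W)) ≠ ⊥ := by
          rw [ne_eq, ENNReal.log_eq_bot_iff]
          exact DV.lint_exp_ne_zero _ hvm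
        refine ⟨_, ⟨fun ω => u ω + W ω, hvm, ⟨|c| + 1, hvb⟩, rfl⟩, ?_⟩
        simp only
        rw [hIv, hLu, ENNReal.log_mul_add, hbzE]
        exact (DV.ereal_arith (∫ ω, u ω ∂P) aW bz hLne).symm
      · rintro ⟨y, ⟨v, hvm, ⟨c, hc⟩, rfl⟩, rfl⟩
        have hvi : Integrable v P := DV.integrable_of_bound P hWP hvm hc
        have hum : Measurable (fun ω => v ω - W ω) := hvm.sub hWm
        have hub : ∀ ω, |v ω - W ω| ≤ (|c| + 1) * (1 + W ω) := by
          intro ω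
          have h1 := hc ω; have h2 := hW0 ω
          have h4 : |v ω - W ω| ≤ |v ω| + W ω :=
            (abs_sub _ _).trans (by rw [abs_of_nonneg h2])
          nlinarith [le_abs_self c]
        have hIu : ∫ ω, (v ω - W ω) ∂P = ∫ ω, v ω ∂P - aW := integral_sub hvi hWP
        have hLu : ∫⁻ ω, ENNReal.ofReal (Real.exp (v ω - W ω)) ∂ R
            = zW R W * ∫⁻ ω, ENNReal.ofReal (Real.exp (v ω)) ∂(tiltedPM R W) := by
          rw [DV.lint_tilted hWm hvm, ← mul_assoc, ENNReal.mul_inv_cancel hz0 hzW, one_mul]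
        have hLne : ENNReal.log
            (∫⁻ ω, ENNReal.ofReal (Real.exp (v ω)) ∂(tiltedPM R W)) ≠ ⊥ := by
          rw [ne_eq, ENNReal.log_eq_bot_iff]
          exact DV.lint_exp_ne_zero _ hvm
        refine ⟨fun ω => v ω - W ω, hum, ⟨|c| + 1, hub⟩, ?_⟩
        rw [hIu, hLu, ENNReal.log_mul_add, hbzE]
        have h5 := DV.ereal_arith (∫ ω, v ω ∂P - aW) aW bz hLne
        rw [sub_add_cancel] at h5
        exact h5.symm
    rw [relEntSF, DV.relEnt_eq, DV.prob P (tiltedPM R W) hW0 hWP, hST,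
      DV.sSup_sub_const, DV.sub_sub]
end

section
/- Let R be a Markov measure on the path space Ω = D([0,1],X), 0 ≤ t ≤ 1, and let P be a conditionable path measure with P ≺ R whose density factorizes as dP/dR = α·β with α, β nonnegative, α measurable with respect to σ(X_{[0,t]}) and β measurable with respect to σ(X_{[t,1]}). Then P-almost everywhere, E_R(α | X_t) and E_R(β | X_t) lie in (0,∞) and E_R(αβ | X_t) = E_R(α | X_t)·E_R(β | X_t) ∈ (0,∞). Furthermore, R-almost everywhere, E_R(αβ | X_t) = 1_{{E_R(α|X_t)<∞, E_R(β|X_t)<∞}} · E_R(α | X_t)·E_R(β | X_t) ∈ [0,∞). -/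
open MeasureTheory Set

/-- A càdlàg path on `[0,1]`: right-continuous with left limits. -/
def IsCadlag {X : Type*} [TopologicalSpace X] (f : Icc (0:ℝ) 1 → X) : Prop :=
  ∀ t : Icc (0:ℝ) 1, ContinuousWithinAt f (Ici t) t ∧
    ∃ l : X, Filter.Tendsto f (nhdsWithin t (Iio t)) (nhds l)

/-- The path space `D([0,1], X)` of càdlàg paths with values in `X`. -/
def PathSpace (X : Type*) [TopologicalSpace X] : Type _ :=
  {f : Icc (0:ℝ) 1 → X // IsCadlag f}

/-- The canonical process `X_t(ω) = ω_t`. -/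
def canon {X : Type*} [TopologicalSpace X] (t : Icc (0:ℝ) 1) : PathSpace X → X :=
  fun ω => ω.1 t

/-- The σ-field on path space is generated by the canonical process. -/
instance pathSpaceMeasurableSpace (X : Type*) [TopologicalSpace X] [MeasurableSpace X] :
    MeasurableSpace (PathSpace X) :=
  ⨆ t : Icc (0:ℝ) 1, MeasurableSpace.comap (canon t) inferInstance

variable {X : Type*} [TopologicalSpace X] [MeasurableSpace X]

/-- The σ-field `σ(X_t)` generated by the position at time `t`. -/
def mAt (t : Icc (0:ℝ) 1) : MeasurableSpace (PathSpace X) :=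
  MeasurableSpace.comap (canon t) inferInstance

/-- The σ-field `σ(X_{[0,t]})` generated by the past up to time `t`. -/
def mUpTo (t : Icc (0:ℝ) 1) : MeasurableSpace (PathSpace X) :=
  ⨆ s : Icc (0:ℝ) 1, ⨆ _ : s ≤ t, MeasurableSpace.comap (canon s) inferInstance

/-- The σ-field `σ(X_{[t,1]})` generated by the future from time `t` on. -/
def mFrom (t : Icc (0:ℝ) 1) : MeasurableSpace (PathSpace X) :=
  ⨆ s : Icc (0:ℝ) 1, ⨆ _ : t ≤ s, MeasurableSpace.comap (canon s) inferInstance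

/-- The σ-field `σ(X_{[s,t]})` generated by the positions between times `s` and `t`. -/
def mBetween (s t : Icc (0:ℝ) 1) : MeasurableSpace (PathSpace X) :=
  ⨆ u : Icc (0:ℝ) 1, ⨆ _ : s ≤ u ∧ u ≤ t, MeasurableSpace.comap (canon u) inferInstance

/-- `C` is (a version of) the conditional expectation, in `[0,∞]`, of the nonnegative
function `Z` given the sub-σ-field `m`, under the (possibly unbounded) measure `R`:
`C` is `m`-measurable and has the same integral as `Z` on every `m`-measurable set.
For a conditionable path measure this characterizes, up to a.e. equality, the monotone
extension `E_R(Z|m) = lim_n E_R(1_{Ω_1 ∪ … ∪ Ω_n}(Z ∧ n)|m)` of the usual conditional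
expectation along a σ-finite partition `(Ω_k)` of `R`. -/
def IsCondExpNN {Ω : Type*} [MeasurableSpace Ω] (R : Measure Ω) (m : MeasurableSpace Ω)
    (Z C : Ω → ENNReal) : Prop :=
  Measurable[m] C ∧
    ∀ s : Set Ω, MeasurableSet[m] s → ∫⁻ ω in s, C ω ∂ R = ∫⁻ ω in s, Z ω ∂ R

/-- A path measure is conditionable if all its time-marginals are σ-finite. -/
def Conditionable (Q : Measure (PathSpace X)) : Prop :=
  ∀ t : Icc (0:ℝ) 1, SigmaFinite (Q.map (canon t))

/-- A path measure `R` is Markov if it is conditionable and, for every time `t`,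
`R(X_{[t,1]} ∈ · | X_{[0,t]}) = R(X_{[t,1]} ∈ · | X_t)`, i.e. every version of the
conditional expectation given `X_t` of the indicator of a future event is also a version
of its conditional expectation given the whole past `X_{[0,t]}`. -/
def IsMarkovMeasure (R : Measure (PathSpace X)) : Prop :=
  Conditionable R ∧
    ∀ t : Icc (0:ℝ) 1, ∀ B : Set (PathSpace X), MeasurableSet[mFrom t] B →
      ∀ C : PathSpace X → ENNReal,
        IsCondExpNN R (mAt t) (B.indicator fun _ => (1 : ENNReal)) C →
        IsCondExpNN R (mUpTo t) (B.indicator fun _ => (1 : ENNReal)) C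



section Aux

variable {Ω : Type*} {m m0 : MeasurableSpace Ω}

lemma setLIntegral_trim_eq (hm : m ≤ m0) (μ : @Measure Ω m0) {f : Ω → ENNReal}
    (hf : Measurable[m] f) {s : Set Ω} (hs : MeasurableSet[m] s) :
    ∫⁻ ω in s, f ω ∂(μ.trim hm) = ∫⁻ ω in s, f ω ∂μ := by
  rw [← lintegral_indicator hs, ← lintegral_indicator (hm s hs),
    lintegral_trim hm (hf.indicator hs)]

lemma ae_le_of_forall_setLIntegral_le_trim (hm : m ≤ m0) (μ : @Measure Ω m0)
    [SigmaFinite (μ.trim hm)] {f g : Ω → ENNReal}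
    (hf : Measurable[m] f) (hg : Measurable[m] g)
    (h : ∀ s, MeasurableSet[m] s → ∫⁻ ω in s, f ω ∂μ ≤ ∫⁻ ω in s, g ω ∂μ) :
    f ≤ᵐ[μ] g := by
  refine ae_of_ae_trim hm ?_
  refine ae_le_of_forall_setLIntegral_le_of_sigmaFinite (μ := μ.trim hm) hf ?_
  intro s hs _
  rw [setLIntegral_trim_eq hm μ hf hs, setLIntegral_trim_eq hm μ hg hs]
  exact h s hs

lemma ae_eq_of_forall_setLIntegral_eq_trim (hm : m ≤ m0) (μ : @Measure Ω m0)
    [SigmaFinite (μ.trim hm)] {f g : Ω → ENNReal}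
    (hf : Measurable[m] f) (hg : Measurable[m] g)
    (h : ∀ s, MeasurableSet[m] s → ∫⁻ ω in s, f ω ∂μ = ∫⁻ ω in s, g ω ∂μ) :
    f =ᵐ[μ] g := by
  refine ae_of_ae_trim hm ?_
  refine ae_eq_of_forall_setLIntegral_eq_of_sigmaFinite (μ := μ.trim hm) hf hg ?_
  intro s hs _
  rw [setLIntegral_trim_eq hm μ hf hs, setLIntegral_trim_eq hm μ hg hs, h s hs]

end Aux

/-- Lemma (Léonard, Lemma 3.1-(b)). Let `R` be a Markov measure and `P` a conditionable
path measure with `P ≺ R` and density `dP/dR = α·β`, where `α` is `σ(X_{[0,t]})`-measurable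
and `β` is `σ(X_{[t,1]})`-measurable, both nonnegative. Then `P`-a.e.,
`E_R(α|X_t), E_R(β|X_t) ∈ (0,∞)` and `E_R(αβ|X_t) = E_R(α|X_t)·E_R(β|X_t) ∈ (0,∞)`;
furthermore `R`-a.e.,
`E_R(αβ|X_t) = 1_{{E_R(α|X_t)<∞, E_R(β|X_t)<∞}}·E_R(α|X_t)·E_R(β|X_t) ∈ [0,∞)`. -/
theorem markov_condexp_product_of_density
    {X : Type*} [TopologicalSpace X] [MeasurableSpace X] [PolishSpace X] [BorelSpace X]
    (R : Measure (PathSpace X)) (hR : IsMarkovMeasure R)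
    (t : Icc (0:ℝ) 1) (α β : PathSpace X → ENNReal)
    (hα : Measurable[mUpTo t] α) (hβ : Measurable[mFrom t] β)
    (hαfin : ∀ ω, α ω ≠ ⊤) (hβfin : ∀ ω, β ω ≠ ⊤)
    (P : Measure (PathSpace X)) (hPc : Conditionable P)
    (hP : ∀ f : PathSpace X → ENNReal, Measurable f →
      ∫⁻ ω, f ω ∂P = ∫⁻ ω, f ω * (α ω * β ω) ∂ R)
    (Cαβ Cα Cβ : PathSpace X → ENNReal)
    (hαβ : IsCondExpNN R (mAt t) (fun ω => α ω * β ω) Cαβ)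
    (hCα : IsCondExpNN R (mAt t) α Cα) (hCβ : IsCondExpNN R (mAt t) β Cβ) :
    (∀ᵐ ω ∂P,
      (0 < Cα ω ∧ Cα ω < ⊤) ∧ (0 < Cβ ω ∧ Cβ ω < ⊤) ∧
      Cαβ ω = Cα ω * Cβ ω ∧ 0 < Cαβ ω ∧ Cαβ ω < ⊤) ∧
    (∀ᵐ ω ∂ R,
      Cαβ ω = Set.indicator {ω' | Cα ω' < ⊤ ∧ Cβ ω' < ⊤}
        (fun ω' => Cα ω' * Cβ ω') ω ∧ Cαβ ω < ⊤) := by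
  classical
  obtain ⟨hRc, hMarkov⟩ := hR
  -- basic σ-algebra comparisons
  have hmAt : (mAt t : MeasurableSpace (PathSpace X)) ≤ pathSpaceMeasurableSpace X :=
    le_iSup (fun s : Icc (0:ℝ) 1 => MeasurableSpace.comap (canon (X := X) s) inferInstance) t
  have hT : Measurable (canon (X := X) t) := measurable_iff_comap_le.mpr hmAt
  have hAtUp : (mAt t : MeasurableSpace (PathSpace X)) ≤ mUpTo t :=
    le_iSup₂ (f := fun (s : Icc (0:ℝ) 1) (_ : s ≤ t) =>
      MeasurableSpace.comap (canon (X := X) s) inferInstance) t le_rfl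
  have hUp : (mUpTo t : MeasurableSpace (PathSpace X)) ≤ pathSpaceMeasurableSpace X :=
    iSup₂_le fun s _ =>
      le_iSup (fun s : Icc (0:ℝ) 1 => MeasurableSpace.comap (canon (X := X) s) inferInstance) s
  have hFrom : (mFrom t : MeasurableSpace (PathSpace X)) ≤ pathSpaceMeasurableSpace X :=
    iSup₂_le fun s _ =>
      le_iSup (fun s : Icc (0:ℝ) 1 => MeasurableSpace.comap (canon (X := X) s) inferInstance) s
  -- σ-finiteness of trims
  have trim_sf : ∀ Q : Measure (PathSpace X), SigmaFinite (Q.map (canon t)) →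
      SigmaFinite (Q.trim hmAt) := by
    intro Q hQ
    refine ⟨⟨⟨fun n => canon t ⁻¹' spanningSets (Q.map (canon t)) n,
      fun _ => mem_univ _, ?_, ?_⟩⟩⟩
    · intro n
      have hsm : MeasurableSet[mAt t] (canon t ⁻¹' spanningSets (Q.map (canon t)) n) :=
        ⟨spanningSets (Q.map (canon t)) n, measurableSet_spanningSets _ n, rfl⟩
      rw [trim_measurableSet_eq hmAt hsm,
        ← Measure.map_apply hT (measurableSet_spanningSets _ n)]
      exact measure_spanningSets_lt_top _ n
    · rw [← preimage_iUnion, iUnion_spanningSets, preimage_univ]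
  haveI hρsf : SigmaFinite (R.trim hmAt) := trim_sf R (hRc t)
  haveI hσsf : SigmaFinite (P.trim hmAt) := trim_sf P (hPc t)
  -- integral conversion and a.e. uniqueness over the σ-finite trim
  have key : ∀ f : PathSpace X → ENNReal, Measurable[mAt t] f →
      ∀ s, MeasurableSet[mAt t] s →
        ∫⁻ ω in s, f ω ∂(R.trim hmAt) = ∫⁻ ω in s, f ω ∂ R :=
    fun f hf s hs => setLIntegral_trim_eq hmAt R hf hs
  have uniq : ∀ f g : PathSpace X → ENNReal, Measurable[mAt t] f → Measurable[mAt t] g →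
      (∀ s, MeasurableSet[mAt t] s → ∫⁻ ω in s, f ω ∂ R = ∫⁻ ω in s, g ω ∂ R) →
      f =ᵐ[R] g :=
    fun f g hf hg h => ae_eq_of_forall_setLIntegral_eq_trim hmAt R hf hg h
  have monoae : ∀ f g : PathSpace X → ENNReal, Measurable[mAt t] f → Measurable[mAt t] g →
      (∀ s, MeasurableSet[mAt t] s → ∫⁻ ω in s, f ω ∂ R ≤ ∫⁻ ω in s, g ω ∂ R) →
      f ≤ᵐ[R] g :=
    fun f g hf hg h => ae_le_of_forall_setLIntegral_le_trim hmAt R hf hg h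
  -- conditional versions for indicators of future sets, upgraded by the Markov property
  have indVer : ∀ B : Set (PathSpace X), MeasurableSet[mFrom t] B →
      ∃ D : PathSpace X → ENNReal, Measurable[mAt t] D ∧
        ∀ s, MeasurableSet[mUpTo t] s →
          ∫⁻ ω in s, D ω ∂ R = ∫⁻ ω in s, B.indicator (fun _ => (1:ENNReal)) ω ∂ R := by
    intro B hB
    have hBm : MeasurableSet B := hFrom B hB
    set ν : @Measure (PathSpace X) (mAt t) := (R.restrict B).trim hmAt with hν
    have hle : ν ≤ R.trim hmAt := by
      refine Measure.le_iff.mpr fun s hs => ?_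
      rw [hν, trim_measurableSet_eq hmAt hs, trim_measurableSet_eq hmAt hs,
        Measure.restrict_apply (hmAt s hs)]
      exact measure_mono inter_subset_left
    haveI : SigmaFinite ν := Measure.sigmaFinite_of_le _ hle
    set D : PathSpace X → ENNReal := ν.rnDeriv (R.trim hmAt) with hD
    have hDm : Measurable[mAt t] D := Measure.measurable_rnDeriv _ _
    have hDset : ∀ s, MeasurableSet[mAt t] s → ∫⁻ ω in s, D ω ∂ R = R (s ∩ B) := by
      intro s hs
      rw [← key D hDm s hs, hD,
        Measure.setLIntegral_rnDeriv' hle.absolutelyContinuous hs, hν,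
        trim_measurableSet_eq hmAt hs, Measure.restrict_apply (hmAt s hs)]
    have hInd : ∀ s : Set (PathSpace X), MeasurableSet s →
        ∫⁻ ω in s, B.indicator (fun _ => (1:ENNReal)) ω ∂ R = R (s ∩ B) := by
      intro s hs
      rw [lintegral_indicator hBm, setLIntegral_one, Measure.restrict_apply hBm, inter_comm]
    have hCond : IsCondExpNN R (mAt t) (B.indicator fun _ => (1:ENNReal)) D :=
      ⟨hDm, fun s hs => by rw [hDset s hs, hInd s (hmAt s hs)]⟩
    exact ⟨D, hDm, (hMarkov t B hB D hCond).2⟩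
  -- every nonnegative future-measurable function has a version that works for the past σ-field
  have QP : ∀ f : PathSpace X → ENNReal, Measurable[mFrom t] f →
      ∃ D, Measurable[mAt t] D ∧ ∀ s, MeasurableSet[mUpTo t] s →
        ∫⁻ ω in s, D ω ∂ R = ∫⁻ ω in s, f ω ∂ R := by
    refine @Measurable.ennreal_induction (PathSpace X) (mFrom t)
      (fun f => ∃ D, Measurable[mAt t] D ∧ ∀ s, MeasurableSet[mUpTo t] s →
        ∫⁻ ω in s, D ω ∂ R = ∫⁻ ω in s, f ω ∂ R) ?_ ?_ ?_
    · -- indicators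
      intro c B hB
      obtain ⟨D, hDm, hDs⟩ := indVer B hB
      refine ⟨fun ω => c * D ω, hDm.const_mul c, fun s hs => ?_⟩
      have h1 : ∫⁻ ω in s, c * D ω ∂ R = c * ∫⁻ ω in s, D ω ∂ R :=
        lintegral_const_mul c (hDm.mono hmAt le_rfl)
      have h2 : ∫⁻ ω in s, B.indicator (fun _ => c) ω ∂ R
          = c * ∫⁻ ω in s, B.indicator (fun _ => (1:ENNReal)) ω ∂ R := by
        rw [← lintegral_const_mul c (measurable_const.indicator (hFrom B hB))]
        exact lintegral_congr fun ω => by by_cases h : ω ∈ B <;> simp [h]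
      rw [h1, h2, hDs s hs]
    · -- addition
      rintro f g - hfm hgm ⟨Df, hDfm, hDf⟩ ⟨Dg, hDgm, hDg⟩
      refine ⟨fun ω => Df ω + Dg ω, hDfm.add hDgm, fun s hs => ?_⟩
      simp only [Pi.add_apply]
      rw [lintegral_add_left (hDfm.mono hmAt le_rfl),
        lintegral_add_left ((hfm.mono hFrom le_rfl) : Measurable f),
        hDf s hs, hDg s hs]
    · -- monotone suprema
      rintro f hfm hmono hQf
      choose Dn hDnm hDn using hQf
      have hle2 : ∀ k n, k ≤ n → Dn k ≤ᵐ[R] Dn n := by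
        intro k n hkn
        refine monoae _ _ (hDnm k) (hDnm n) fun s hs => ?_
        rw [hDn k s (hAtUp s hs), hDn n s (hAtUp s hs)]
        exact lintegral_mono fun ω => hmono hkn ω
      set D' : ℕ → PathSpace X → ENNReal := fun n ω => ⨆ k, ⨆ _ : k ≤ n, Dn k ω with hD'
      have hD'm : ∀ n, Measurable[mAt t] (D' n) := fun n =>
        Measurable.iSup fun k => Measurable.iSup fun _ => hDnm k
      have hD'mono : Monotone D' := fun a b hab ω =>
        iSup₂_le fun k hk => le_iSup₂ (f := fun k (_ : k ≤ b) => Dn k ω) k (hk.trans hab)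
      have hD'ae : ∀ n, D' n =ᵐ[R] Dn n := by
        intro n
        have h1 : ∀ᵐ ω ∂ R, ∀ k, k ≤ n → Dn k ω ≤ Dn n ω := by
          rw [ae_all_iff]
          intro k
          by_cases hk : k ≤ n
          · filter_upwards [hle2 k n hk] with ω h using fun _ => h
          · exact ae_of_all _ fun ω h => absurd h hk
        filter_upwards [h1] with ω hω
        refine le_antisymm (iSup₂_le fun k hk => hω k hk) ?_
        exact le_iSup₂ (f := fun k (_ : k ≤ n) => Dn k ω) n le_rfl
      refine ⟨fun ω => ⨆ n, D' n ω, Measurable.iSup hD'm, fun s hs => ?_⟩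
      rw [lintegral_iSup (fun n => (hD'm n).mono hmAt le_rfl) (fun a b hab ω => hD'mono hab ω),
        lintegral_iSup (fun n => (hfm n).mono hFrom le_rfl) hmono]
      refine iSup_congr fun n => ?_
      rw [lintegral_congr_ae (ae_restrict_of_ae (hD'ae n)), hDn n s hs]
  obtain ⟨Dβ, hDβm, hDβ⟩ := QP β hβ
  -- Cβ is also a version of the conditional expectation given the past
  have hCβD : Cβ =ᵐ[R] Dβ :=
    uniq _ _ hCβ.1 hDβm fun s hs => by rw [hCβ.2 s hs, ← hDβ s (hAtUp s hs)]
  have hCβ_up : ∀ s, MeasurableSet[mUpTo t] s →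
      ∫⁻ ω in s, Cβ ω ∂ R = ∫⁻ ω in s, β ω ∂ R := by
    intro s hs
    rw [lintegral_congr_ae (ae_restrict_of_ae hCβD), hDβ s hs]
  -- replacing β by Cβ against past-measurable densities
  have hβCβ : ∀ φ : PathSpace X → ENNReal, Measurable[mUpTo t] φ →
      ∫⁻ ω, φ ω * β ω ∂ R = ∫⁻ ω, φ ω * Cβ ω ∂ R := by
    intro φ hφ
    have hβ0 : Measurable β := hβ.mono hFrom le_rfl
    have hCβ0 : Measurable Cβ := hCβ.1.mono hmAt le_rfl
    have hφ0 : Measurable φ := hφ.mono hUp le_rfl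
    have htrim : (R.withDensity β).trim hUp = (R.withDensity Cβ).trim hUp := by
      refine @Measure.ext _ (mUpTo t) _ _ fun s hs => ?_
      rw [trim_measurableSet_eq hUp hs, trim_measurableSet_eq hUp hs,
        withDensity_apply _ (hUp s hs), withDensity_apply _ (hUp s hs)]
      exact (hCβ_up s hs).symm
    have h1 := lintegral_trim (μ := R.withDensity β) hUp hφ
    have h2 := lintegral_trim (μ := R.withDensity Cβ) hUp hφ
    rw [htrim] at h1
    have hwd : ∫⁻ ω, (β * φ) ω ∂ R = ∫⁻ ω, (Cβ * φ) ω ∂ R := by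
      rw [← lintegral_withDensity_eq_lintegral_mul R hβ0 hφ0,
        ← lintegral_withDensity_eq_lintegral_mul R hCβ0 hφ0, ← h1, h2]
    calc ∫⁻ ω, φ ω * β ω ∂ R = ∫⁻ ω, (β * φ) ω ∂ R := lintegral_congr fun ω => mul_comm _ _
      _ = ∫⁻ ω, (Cβ * φ) ω ∂ R := hwd
      _ = ∫⁻ ω, φ ω * Cβ ω ∂ R := lintegral_congr fun ω => mul_comm _ _
  -- replacing α by Cα against σ(X_t)-measurable densities
  have hαCα : ∀ ψ : PathSpace X → ENNReal, Measurable[mAt t] ψ →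
      ∫⁻ ω, ψ ω * α ω ∂ R = ∫⁻ ω, ψ ω * Cα ω ∂ R := by
    intro ψ hψ
    have hα0 : Measurable α := hα.mono hUp le_rfl
    have hCα0 : Measurable Cα := hCα.1.mono hmAt le_rfl
    have hψ0 : Measurable ψ := hψ.mono hmAt le_rfl
    have htrim : (R.withDensity α).trim hmAt = (R.withDensity Cα).trim hmAt := by
      refine @Measure.ext _ (mAt t) _ _ fun s hs => ?_
      rw [trim_measurableSet_eq hmAt hs, trim_measurableSet_eq hmAt hs,
        withDensity_apply _ (hmAt s hs), withDensity_apply _ (hmAt s hs)]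
      exact (hCα.2 s hs).symm
    have h1 := lintegral_trim (μ := R.withDensity α) hmAt hψ
    have h2 := lintegral_trim (μ := R.withDensity Cα) hmAt hψ
    rw [htrim] at h1
    have hwd : ∫⁻ ω, (α * ψ) ω ∂ R = ∫⁻ ω, (Cα * ψ) ω ∂ R := by
      rw [← lintegral_withDensity_eq_lintegral_mul R hα0 hψ0,
        ← lintegral_withDensity_eq_lintegral_mul R hCα0 hψ0, ← h1, h2]
    calc ∫⁻ ω, ψ ω * α ω ∂ R = ∫⁻ ω, (α * ψ) ω ∂ R := lintegral_congr fun ω => mul_comm _ _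
      _ = ∫⁻ ω, (Cα * ψ) ω ∂ R := hwd
      _ = ∫⁻ ω, ψ ω * Cα ω ∂ R := lintegral_congr fun ω => mul_comm _ _
  -- main set-integral identity on σ(X_t)
  have main : ∀ s, MeasurableSet[mAt t] s →
      ∫⁻ ω in s, Cαβ ω ∂ R = ∫⁻ ω in s, Cα ω * Cβ ω ∂ R := by
    intro s hs
    have hsu : MeasurableSet s := hmAt s hs
    have e1 : ∫⁻ ω in s, α ω * β ω ∂ R = ∫⁻ ω, s.indicator α ω * β ω ∂ R := by
      rw [← lintegral_indicator hsu]
      exact lintegral_congr fun ω => by by_cases h : ω ∈ s <;> simp [h]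
    have e2 : ∫⁻ ω, s.indicator α ω * Cβ ω ∂ R = ∫⁻ ω in s, α ω * Cβ ω ∂ R := by
      rw [← lintegral_indicator hsu]
      exact lintegral_congr fun ω => by by_cases h : ω ∈ s <;> simp [h]
    have e3 : ∫⁻ ω in s, α ω * Cβ ω ∂ R = ∫⁻ ω, s.indicator Cβ ω * α ω ∂ R := by
      rw [← lintegral_indicator hsu]
      exact lintegral_congr fun ω => by by_cases h : ω ∈ s <;> simp [h, mul_comm]
    have e4 : ∫⁻ ω, s.indicator Cβ ω * Cα ω ∂ R = ∫⁻ ω in s, Cα ω * Cβ ω ∂ R := by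
      rw [← lintegral_indicator hsu]
      exact lintegral_congr fun ω => by by_cases h : ω ∈ s <;> simp [h, mul_comm]
    rw [hαβ.2 s hs, e1, hβCβ (s.indicator α) (hα.indicator (hAtUp s hs)), e2, e3,
      hαCα (s.indicator Cβ) (hCβ.1.indicator hs), e4]
  have hprod : Cαβ =ᵐ[R] fun ω => Cα ω * Cβ ω :=
    uniq _ _ hαβ.1 (hCα.1.mul hCβ.1) main
  -- the P-measure of measurable sets
  have hPmeas : ∀ N : Set (PathSpace X), MeasurableSet N →
      P N = ∫⁻ ω in N, α ω * β ω ∂ R := by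
    intro N hN
    have h := hP (N.indicator fun _ => 1) (measurable_const.indicator hN)
    rw [lintegral_indicator hN, setLIntegral_one] at h
    rw [h, ← lintegral_indicator hN]
    exact lintegral_congr fun ω => by by_cases hmem : ω ∈ N <;> simp [hmem]
  -- finiteness of Cαβ, R-a.e.
  have hPtrim : (R.trim hmAt).withDensity Cαβ = P.trim hmAt := by
    refine @Measure.ext _ (mAt t) _ _ fun s hs => ?_
    rw [withDensity_apply _ hs, key Cαβ hαβ.1 s hs, hαβ.2 s hs,
      trim_measurableSet_eq hmAt hs, hPmeas s (hmAt s hs)]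
  have hfin : ∀ᵐ ω ∂ R, Cαβ ω < ⊤ := by
    refine ae_of_ae_trim hmAt ?_
    have h1 : (((R.trim hmAt).withDensity Cαβ).rnDeriv (R.trim hmAt)) =ᵐ[R.trim hmAt] Cαβ :=
      Measure.rnDeriv_withDensity (R.trim hmAt) hαβ.1
    rw [hPtrim] at h1
    have h2 := Measure.rnDeriv_lt_top (P.trim hmAt) (R.trim hmAt)
    filter_upwards [h1, h2] with ω hω1 hω2
    rw [← hω1]; exact hω2
  -- second bullet
  have bullet2 : ∀ᵐ ω ∂ R,
      Cαβ ω = Set.indicator {ω' | Cα ω' < ⊤ ∧ Cβ ω' < ⊤}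
        (fun ω' => Cα ω' * Cβ ω') ω ∧ Cαβ ω < ⊤ := by
    filter_upwards [hprod, hfin] with ω h1 h2
    refine ⟨?_, h2⟩
    by_cases h : Cα ω < ⊤ ∧ Cβ ω < ⊤
    · rw [Set.indicator_of_mem (show ω ∈ {ω' | Cα ω' < ⊤ ∧ Cβ ω' < ⊤} from h)]; exact h1
    · rw [Set.indicator_of_notMem (show ω ∉ {ω' | Cα ω' < ⊤ ∧ Cβ ω' < ⊤} from h), h1]
      rw [h1] at h2
      rcases not_and_or.mp h with h' | h'
      · have hCa : Cα ω = ⊤ := by simpa [lt_top_iff_ne_top, not_not] using h'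
        have h0 : Cβ ω = 0 := by
          by_contra hb
          rw [hCa, ENNReal.top_mul hb] at h2
          exact absurd h2 (lt_irrefl _)
        simp [h0]
      · have hCb : Cβ ω = ⊤ := by simpa [lt_top_iff_ne_top, not_not] using h'
        have h0 : Cα ω = 0 := by
          by_contra hb
          rw [hCb, ENNReal.mul_top hb] at h2
          exact absurd h2 (lt_irrefl _)
        simp [h0]
  have hprodInd : Cαβ =ᵐ[R] fun ω => Set.indicator {ω' | Cα ω' < ⊤ ∧ Cβ ω' < ⊤}
      (fun ω' => Cα ω' * Cβ ω') ω := by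
    filter_upwards [bullet2] with ω h using h.1
  -- P-null sets from the indicator formula
  have null_of : ∀ N : Set (PathSpace X), MeasurableSet[mAt t] N →
      (∀ ω ∈ N, Set.indicator {ω' | Cα ω' < ⊤ ∧ Cβ ω' < ⊤}
        (fun ω' => Cα ω' * Cβ ω') ω = 0) → P N = 0 := by
    intro N hN hzero
    have hN0 : MeasurableSet N := hmAt N hN
    rw [hPmeas N hN0, ← hαβ.2 N hN]
    have hz : ∀ᵐ ω ∂(R.restrict N), Cαβ ω = 0 := by
      filter_upwards [ae_restrict_of_ae hprodInd, ae_restrict_mem hN0] with ω h1 h2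
      rw [h1]; exact hzero ω h2
    rw [lintegral_congr_ae hz, lintegral_zero]
  -- P ≪ R
  have hPll : P ≪ R := by
    refine Measure.AbsolutelyContinuous.mk fun N hN h0 => ?_
    rw [hPmeas N hN, Measure.restrict_eq_zero.mpr h0, lintegral_zero_measure]
  -- a.e. finiteness and positivity of Cα, Cβ under P
  have aefinα : ∀ᵐ ω ∂P, Cα ω < ⊤ := by
    rw [ae_iff]
    have hset : {ω | ¬ Cα ω < ⊤} = Cα ⁻¹' {⊤} := by
      ext ω; simp [lt_top_iff_ne_top, not_not]
    rw [hset]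
    refine null_of _ (hCα.1 (measurableSet_singleton ⊤)) fun ω hω => ?_
    have htop : Cα ω = ⊤ := hω
    refine Set.indicator_of_notMem (fun hmem => ?_) _
    exact absurd hmem.1 (by rw [htop]; exact lt_irrefl ⊤)
  have aefinβ : ∀ᵐ ω ∂P, Cβ ω < ⊤ := by
    rw [ae_iff]
    have hset : {ω | ¬ Cβ ω < ⊤} = Cβ ⁻¹' {⊤} := by
      ext ω; simp [lt_top_iff_ne_top, not_not]
    rw [hset]
    refine null_of _ (hCβ.1 (measurableSet_singleton ⊤)) fun ω hω => ?_
    have htop : Cβ ω = ⊤ := hω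
    refine Set.indicator_of_notMem (fun hmem => ?_) _
    exact absurd hmem.2 (by rw [htop]; exact lt_irrefl ⊤)
  have aeposα : ∀ᵐ ω ∂P, 0 < Cα ω := by
    rw [ae_iff]
    have hset : {ω | ¬ 0 < Cα ω} = Cα ⁻¹' {0} := by
      ext ω; simp [pos_iff_ne_zero, not_not]
    rw [hset]
    refine null_of _ (hCα.1 (measurableSet_singleton 0)) fun ω hω => ?_
    have h0 : Cα ω = 0 := hω
    by_cases hmem : ω ∈ {ω' | Cα ω' < ⊤ ∧ Cβ ω' < ⊤}
    · rw [Set.indicator_of_mem hmem]; simp [h0]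
    · exact Set.indicator_of_notMem hmem _
  have aeposβ : ∀ᵐ ω ∂P, 0 < Cβ ω := by
    rw [ae_iff]
    have hset : {ω | ¬ 0 < Cβ ω} = Cβ ⁻¹' {0} := by
      ext ω; simp [pos_iff_ne_zero, not_not]
    rw [hset]
    refine null_of _ (hCβ.1 (measurableSet_singleton 0)) fun ω hω => ?_
    have h0 : Cβ ω = 0 := hω
    by_cases hmem : ω ∈ {ω' | Cα ω' < ⊤ ∧ Cβ ω' < ⊤}
    · rw [Set.indicator_of_mem hmem]; simp [h0]
    · exact Set.indicator_of_notMem hmem _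
  refine ⟨?_, bullet2⟩
  have hPInd : ∀ᵐ ω ∂P, Cαβ ω = Set.indicator {ω' | Cα ω' < ⊤ ∧ Cβ ω' < ⊤}
      (fun ω' => Cα ω' * Cβ ω') ω := hprodInd.filter_mono hPll.ae_le
  filter_upwards [hPInd, aefinα, aefinβ, aeposα, aeposβ] with ω hind hfa hfb hpa hpb
  have hmem : ω ∈ {ω' | Cα ω' < ⊤ ∧ Cβ ω' < ⊤} := ⟨hfa, hfb⟩
  have heq : Cαβ ω = Cα ω * Cβ ω := by rw [hind, Set.indicator_of_mem hmem]
  refine ⟨⟨hpa, hfa⟩, ⟨hpb, hfb⟩, heq, ?_, ?_⟩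
  · rw [heq]; exact ENNReal.mul_pos hpa.ne' hpb.ne'
  · rw [heq]; exact ENNReal.mul_lt_top hfa hfb
end

section
/- Let R be a Markov measure on the path space Ω = D([0,1],X), let 0 ≤ s ≤ t ≤ 1, and let α, β : Ω → [0,∞) be nonnegative measurable functions with α measurable with respect to σ(X_{[0,s]}) and β measurable with respect to σ(X_{[t,1]}). Then for R-almost every ω: if E_R(αβ | X_{[s,t]})(ω) = 0 then E_R(α | X_s)(ω) = 0 or E_R(β | X_t)(ω) = 0; and if E_R(αβ | X_{[s,t]})(ω) > 0 then E_R(α | X_s)(ω) > 0, E_R(β | X_t)(ω) > 0 and E_R(αβ | X_{[s,t]})(ω) = E_R(α | X_s)(ω)·E_R(β | X_t)(ω) ∈ (0,∞]. -/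
open MeasureTheory Set

variable {X : Type*} [TopologicalSpace X] [MeasurableSpace X]

section GenericCondExp

variable {Y : Type*} {m : MeasurableSpace Y} [m0 : MeasurableSpace Y] {R : Measure Y}

lemma setLIntegral_trim' (hm : m ≤ m0) {f : Y → ENNReal}
    (hf : Measurable[m] f) {A : Set Y} (hA : MeasurableSet[m] A) :
    ∫⁻ ω in A, f ω ∂(R.trim hm) = ∫⁻ ω in A, f ω ∂ R := by
  rw [restrict_trim hm R hA, lintegral_trim hm hf]

lemma isCondExpNN_ae_eq' (hm : m ≤ m0)
    [SigmaFinite (R.trim hm)] {Z C C' : Y → ENNReal}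
    (hC : IsCondExpNN R m Z C) (hC' : IsCondExpNN R m Z C') : C =ᵐ[R] C' := by
  refine ae_eq_of_ae_eq_trim (hm := hm) ?_
  refine ae_eq_of_forall_setLIntegral_eq_of_sigmaFinite (μ := R.trim hm) hC.1 hC'.1 ?_
  intro A hA _
  rw [setLIntegral_trim' hm hC.1 hA, setLIntegral_trim' hm hC'.1 hA, hC.2 A hA, hC'.2 A hA]

lemma isCondExpNN_mono' (hm : m ≤ m0)
    [SigmaFinite (R.trim hm)] {Z Z' C C' : Y → ENNReal} (hZZ' : ∀ ω, Z ω ≤ Z' ω)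
    (hC : IsCondExpNN R m Z C) (hC' : IsCondExpNN R m Z' C') : C ≤ᵐ[R] C' := by
  refine ae_le_of_ae_le_trim (hm := hm) ?_
  refine ae_le_of_forall_setLIntegral_le_of_sigmaFinite (μ := R.trim hm) hC.1 ?_
  intro A hA _
  rw [setLIntegral_trim' hm hC.1 hA, setLIntegral_trim' hm hC'.1 hA, hC.2 A hA, hC'.2 A hA]
  exact lintegral_mono fun ω => hZZ' ω

lemma setLIntegral_eq_lintegral_mul_indicator' {B : Set Y} (hB : MeasurableSet B)
    (f : Y → ENNReal) :
    ∫⁻ ω in B, f ω ∂ R = ∫⁻ ω, f ω * B.indicator (fun _ => 1) ω ∂ R := by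
  rw [← lintegral_indicator hB]
  congr 1; funext ω; by_cases h : ω ∈ B <;> simp [h]

lemma condExpNN_lintegral_mul (hm : m ≤ m0) {Z C : Y → ENNReal} (hZ : Measurable Z)
    (hC : IsCondExpNN R m Z C) {f : Y → ENNReal} (hf : Measurable[m] f) :
    ∫⁻ ω, f ω * C ω ∂ R = ∫⁻ ω, f ω * Z ω ∂ R := by
  have hCm : Measurable C := hC.1.mono hm le_rfl
  refine @Measurable.ennreal_induction Y m
    (fun f => ∫⁻ ω, f ω * C ω ∂ R = ∫⁻ ω, f ω * Z ω ∂ R) ?_ ?_ ?_ f hf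
  · intro c A hA
    have hA' : MeasurableSet A := hm A hA
    have e1 : ∀ u : Y → ENNReal, Measurable u →
        ∫⁻ ω, A.indicator (fun _ => c) ω * u ω ∂ R = c * ∫⁻ ω in A, u ω ∂ R := by
      intro u hu
      rw [← lintegral_const_mul c hu, ← lintegral_indicator hA']
      congr 1; funext ω; by_cases h : ω ∈ A <;> simp [h]
    rw [e1 C hCm, e1 Z hZ, hC.2 A hA]
  · intro f g _ hfm hgm hf hg
    have hfm' : Measurable f := hfm.mono hm le_rfl
    simp only [Pi.add_apply, add_mul]
    rw [lintegral_add_left (f := fun ω => f ω * C ω) (hfm'.mul hCm),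
      lintegral_add_left (f := fun ω => f ω * Z ω) (hfm'.mul hZ), hf, hg]
  · intro f hfm hmono hf
    have e2 : ∀ u : Y → ENNReal, Measurable u →
        ∫⁻ ω, (⨆ n, f n ω) * u ω ∂ R = ⨆ n, ∫⁻ ω, f n ω * u ω ∂ R := by
      intro u hu
      rw [← lintegral_iSup (f := fun n ω => f n ω * u ω) (fun n => ((hfm n).mono hm le_rfl).mul hu)
        (fun i j hij ω => mul_le_mul_left (hmono hij ω) _)]
      congr 1; funext ω; exact ENNReal.iSup_mul _ _
    rw [e2 C hCm, e2 Z hZ]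
    exact iSup_congr hf

lemma isCondExpNN_add' {Z Z' C C' : Y → ENNReal} (hm : m ≤ m0) (hZm : Measurable Z)
    (hC : IsCondExpNN R m Z C) (hC' : IsCondExpNN R m Z' C') :
    IsCondExpNN R m (fun ω => Z ω + Z' ω) (fun ω => C ω + C' ω) := by
  refine ⟨hC.1.add hC'.1, fun A hA => ?_⟩
  simp only []
  rw [lintegral_add_left (hC.1.mono hm le_rfl), lintegral_add_left hZm,
    hC.2 A hA, hC'.2 A hA]

lemma isCondExpNN_const_mul' (hm : m ≤ m0) {Z C : Y → ENNReal} (hZ : Measurable Z)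
    (hC : IsCondExpNN R m Z C) (c : ENNReal) :
    IsCondExpNN R m (fun ω => c * Z ω) (fun ω => c * C ω) := by
  refine ⟨hC.1.const_mul c, fun A hA => ?_⟩
  rw [lintegral_const_mul c (hC.1.mono hm le_rfl), lintegral_const_mul c hZ, hC.2 A hA]

lemma exists_condExpNN_indicator' (hm : m ≤ m0) [SigmaFinite (R.trim hm)]
    {B : Set Y} (_hB : MeasurableSet B) :
    ∃ C, IsCondExpNN R m (B.indicator fun _ => 1) C := by
  set Z : Y → ENNReal := B.indicator fun _ => 1 with hZdef
  set ν : @Measure Y m := (R.withDensity Z).trim hm with hνdef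
  have hνle : ν ≤ R.trim hm := by
    rw [@Measure.le_iff Y m]
    intro A hA
    rw [hνdef, trim_measurableSet_eq hm hA, trim_measurableSet_eq hm hA,
      withDensity_apply _ (hm A hA)]
    calc ∫⁻ ω in A, Z ω ∂ R ≤ ∫⁻ _ in A, 1 ∂ R :=
          lintegral_mono fun ω => indicator_le (fun _ _ => le_rfl) ω
      _ = R A := setLIntegral_one A
  haveI : SigmaFinite ν := Measure.sigmaFinite_of_le _ hνle
  have hac : ν ≪ R.trim hm := Measure.absolutelyContinuous_of_le hνle
  refine ⟨ν.rnDeriv (R.trim hm), Measure.measurable_rnDeriv ν (R.trim hm), fun A hA => ?_⟩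
  rw [← setLIntegral_trim' hm (Measure.measurable_rnDeriv ν (R.trim hm)) hA,
    Measure.setLIntegral_rnDeriv' hac hA, hνdef, trim_measurableSet_eq hm hA,
    withDensity_apply _ (hm A hA)]

end GenericCondExp
section PathAux

variable {X : Type*} [TopologicalSpace X] [MeasurableSpace X]

lemma mAt_le_top (t : Icc (0:ℝ) 1) :
    (mAt t : MeasurableSpace (PathSpace X)) ≤ pathSpaceMeasurableSpace X :=
  le_iSup (fun u : Icc (0:ℝ) 1 =>
    MeasurableSpace.comap (canon (X := X) u) inferInstance) t

lemma measurable_canon (t : Icc (0:ℝ) 1) : Measurable (canon (X := X) t) :=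
  measurable_iff_comap_le.mpr (mAt_le_top t)

lemma mAt_le_mUpTo {u t : Icc (0:ℝ) 1} (h : u ≤ t) :
    (mAt u : MeasurableSpace (PathSpace X)) ≤ mUpTo t :=
  le_iSup₂ (f := fun (v : Icc (0:ℝ) 1) (_ : v ≤ t) =>
    MeasurableSpace.comap (canon (X := X) v) inferInstance) u h

lemma mAt_le_mFrom {u t : Icc (0:ℝ) 1} (h : t ≤ u) :
    (mAt u : MeasurableSpace (PathSpace X)) ≤ mFrom t :=
  le_iSup₂ (f := fun (v : Icc (0:ℝ) 1) (_ : t ≤ v) =>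
    MeasurableSpace.comap (canon (X := X) v) inferInstance) u h

lemma mAt_le_mBetween {u s t : Icc (0:ℝ) 1} (h1 : s ≤ u) (h2 : u ≤ t) :
    (mAt u : MeasurableSpace (PathSpace X)) ≤ mBetween s t :=
  le_iSup₂ (f := fun (v : Icc (0:ℝ) 1) (_ : s ≤ v ∧ v ≤ t) =>
    MeasurableSpace.comap (canon (X := X) v) inferInstance) u ⟨h1, h2⟩

lemma mUpTo_le_top (t : Icc (0:ℝ) 1) :
    (mUpTo t : MeasurableSpace (PathSpace X)) ≤ pathSpaceMeasurableSpace X :=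
  iSup₂_le fun u _ => mAt_le_top u

lemma mFrom_le_top (t : Icc (0:ℝ) 1) :
    (mFrom t : MeasurableSpace (PathSpace X)) ≤ pathSpaceMeasurableSpace X :=
  iSup₂_le fun u _ => mAt_le_top u

lemma mBetween_le_top (s t : Icc (0:ℝ) 1) :
    (mBetween s t : MeasurableSpace (PathSpace X)) ≤ pathSpaceMeasurableSpace X :=
  iSup₂_le fun u _ => mAt_le_top u

lemma mUpTo_mono {s t : Icc (0:ℝ) 1} (h : s ≤ t) :
    (mUpTo s : MeasurableSpace (PathSpace X)) ≤ mUpTo t :=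
  iSup₂_le fun u hu => mAt_le_mUpTo (hu.trans h)

lemma mBetween_le_mUpTo (s t : Icc (0:ℝ) 1) :
    (mBetween s t : MeasurableSpace (PathSpace X)) ≤ mUpTo t :=
  iSup₂_le fun _ hu => mAt_le_mUpTo hu.2

lemma mBetween_le_mFrom (s t : Icc (0:ℝ) 1) :
    (mBetween s t : MeasurableSpace (PathSpace X)) ≤ mFrom s :=
  iSup₂_le fun _ hu => mAt_le_mFrom hu.1

lemma sigmaFinite_trim_mAt {R : Measure (PathSpace X)} (hR : Conditionable R)
    (u : Icc (0:ℝ) 1) : SigmaFinite (R.trim (mAt_le_top u)) := by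
  haveI := hR u
  set μ := R.map (canon (X := X) u) with hμ
  refine ⟨⟨⟨fun n => canon u ⁻¹' spanningSets μ n, fun _ => trivial, fun n => ?_, ?_⟩⟩⟩
  · have hmeas : MeasurableSet[mAt u] (canon (X := X) u ⁻¹' spanningSets μ n) :=
      ⟨spanningSets μ n, measurableSet_spanningSets μ n, rfl⟩
    rw [trim_measurableSet_eq (mAt_le_top u) hmeas,
      ← Measure.map_apply (measurable_canon u) (measurableSet_spanningSets μ n)]
    exact measure_spanningSets_lt_top μ n
  · rw [← Set.preimage_iUnion, iUnion_spanningSets, Set.preimage_univ]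

variable {R : Measure (PathSpace X)}

private def coeSF {X : Type*} [TopologicalSpace X] [MeasurableSpace X] (t : Icc (0:ℝ) 1)
    (ψ : @SimpleFunc (PathSpace X) (mFrom t) ENNReal) : PathSpace X → ENNReal :=
  @DFunLike.coe _ _ _ (@SimpleFunc.instFunLike (PathSpace X) ENNReal (mFrom t)) ψ

lemma markov_upgrade (hR : IsMarkovMeasure R) (t : Icc (0:ℝ) 1)
    {g D : PathSpace X → ENNReal} (hg : Measurable[mFrom t] g)
    (hD : IsCondExpNN R (mAt t) g D) : IsCondExpNN R (mUpTo t) g D := by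
  haveI : SigmaFinite (R.trim (mAt_le_top (X := X) t)) := sigmaFinite_trim_mAt hR.1 t
  have hco_meas : ∀ ψ, Measurable (coeSF t ψ) := fun ψ =>
    Measurable.mono (@SimpleFunc.measurable (PathSpace X) ENNReal (mFrom t) _ ψ)
      (mFrom_le_top t) le_rfl
  -- existence of two-level versions for simple functions
  have hex : ∀ φ : @SimpleFunc (PathSpace X) (mFrom t) ENNReal,
      ∃ E, IsCondExpNN R (mAt t) (coeSF t φ) E ∧ IsCondExpNN R (mUpTo t) (coeSF t φ) E := by
    intro φ
    refine @SimpleFunc.induction (PathSpace X) ENNReal (mFrom t) _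
      (fun ψ => ∃ E, IsCondExpNN R (mAt t) (coeSF t ψ) E ∧
        IsCondExpNN R (mUpTo t) (coeSF t ψ) E) ?_ ?_ φ
    · intro c B hB
      obtain ⟨E, hE⟩ := exists_condExpNN_indicator' (m := mAt t) (R := R) (mAt_le_top t)
        (mFrom_le_top t B hB)
      have hE' := hR.2 t B hB E hE
      have hZm : Measurable (B.indicator fun _ => (1 : ENNReal)) :=
        measurable_const.indicator (mFrom_le_top t B hB)
      suffices h : ∀ ψc : PathSpace X → ENNReal,
          (∀ ω, ψc ω = c * B.indicator (fun _ => 1) ω) →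
          ∃ E', IsCondExpNN R (mAt t) ψc E' ∧ IsCondExpNN R (mUpTo t) ψc E' by
        refine h _ fun ω => ?_
        by_cases hω : ω ∈ B <;>
          simp [coeSF, SimpleFunc.piecewise_apply, SimpleFunc.coe_const, hω]
      intro ψc hψc
      have hc : ψc = fun ω => c * B.indicator (fun _ => 1) ω := funext hψc
      rw [hc]
      exact ⟨fun ω => c * E ω, isCondExpNN_const_mul' (mAt_le_top t) hZm hE c,
        isCondExpNN_const_mul' (mUpTo_le_top t) hZm hE' c⟩
    · intro ψ ψ' _ h1 h2
      obtain ⟨E1, hE11, hE12⟩ := h1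
      obtain ⟨E2, hE21, hE22⟩ := h2
      have hψm : Measurable (coeSF t ψ) := hco_meas ψ
      suffices h : ∀ ψc : PathSpace X → ENNReal,
          (∀ ω, ψc ω = coeSF t ψ ω + coeSF t ψ' ω) →
          ∃ E', IsCondExpNN R (mAt t) ψc E' ∧ IsCondExpNN R (mUpTo t) ψc E' by
        refine h _ fun ω => ?_
        simp [coeSF, SimpleFunc.coe_add]
      intro ψc hψc
      have hc : ψc = fun ω => coeSF t ψ ω + coeSF t ψ' ω := funext hψc
      rw [hc]
      exact ⟨fun ω => E1 ω + E2 ω,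
        isCondExpNN_add' (mAt_le_top t) hψm hE11 hE21,
        isCondExpNN_add' (mUpTo_le_top t) hψm hE12 hE22⟩
  set gn : ℕ → PathSpace X → ENNReal :=
    fun n => coeSF t (@SimpleFunc.eapprox _ (mFrom t) g n) with hgn
  choose E hE1 hE2 using fun n => hex (@SimpleFunc.eapprox _ (mFrom t) g n)
  have hgn_mono : ∀ i j, i ≤ j → ∀ ω, gn i ω ≤ gn j ω := by
    have hm := @SimpleFunc.monotone_eapprox _ (mFrom t) g
    exact fun i j hij ω => (@SimpleFunc.coe_le_coe (PathSpace X) ENNReal (mFrom t) _ _ _).mpr (hm hij) ω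
  have hgn_meas : ∀ n, Measurable (gn n) := fun n => hco_meas _
  have hgn_sup : ∀ ω, (⨆ n, gn n ω) = g ω := fun ω =>
    @SimpleFunc.iSup_eapprox_apply _ (mFrom t) g hg ω
  have hmono : ∀ n, E n ≤ᵐ[R] E (n + 1) := fun n =>
    isCondExpNN_mono' (R := R) (mAt_le_top t) (hgn_mono n (n + 1) (Nat.le_succ n))
      (hE1 n) (hE1 (n + 1))
  set F : ℕ → PathSpace X → ENNReal := fun n => partialSups E n with hF
  have hFmeas : ∀ n, Measurable[mAt t] (F n) := by
    intro n
    induction n with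
    | zero => simpa [hF, partialSups_zero] using (hE1 0).1
    | succ n ih =>
      have : F (n + 1) = fun ω => F n ω ⊔ E (n + 1) ω := by
        funext ω; simp [hF, partialSups_succ, Pi.sup_apply]
      rw [this]
      exact Measurable.sup ih (hE1 (n + 1)).1
  have hFae : ∀ n, F n =ᵐ[R] E n := by
    intro n
    induction n with
    | zero => simp [hF, partialSups_zero]
    | succ n ih =>
      filter_upwards [ih, hmono n] with ω h1 h2
      have : F (n + 1) ω = F n ω ⊔ E (n + 1) ω := by
        simp [hF, partialSups_succ, Pi.sup_apply]
      rw [this, h1]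
      exact sup_eq_right.mpr h2
  have hFmono : Monotone F := (partialSups E).monotone
  set D' : PathSpace X → ENNReal := fun ω => ⨆ n, F n ω with hD'
  have hD'meas : Measurable[mAt t] D' := by exact Measurable.iSup hFmeas
  have key : ∀ A : Set (PathSpace X), MeasurableSet A →
      (∀ n, ∫⁻ ω in A, E n ω ∂ R = ∫⁻ ω in A, gn n ω ∂ R) →
      ∫⁻ ω in A, D' ω ∂ R = ∫⁻ ω in A, g ω ∂ R := by
    intro A hA hint
    have l1 : ∫⁻ ω in A, D' ω ∂ R = ⨆ n, ∫⁻ ω in A, F n ω ∂ R :=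
      lintegral_iSup (fun n => (hFmeas n).mono (mAt_le_top t) le_rfl)
        (fun i j hij ω => hFmono hij ω)
    have l2 : ∀ n, ∫⁻ ω in A, F n ω ∂ R = ∫⁻ ω in A, E n ω ∂ R := fun n =>
      lintegral_congr_ae (ae_restrict_of_ae (hFae n))
    have l3 : ∫⁻ ω in A, g ω ∂ R = ⨆ n, ∫⁻ ω in A, gn n ω ∂ R := by
      rw [← lintegral_iSup (fun n => hgn_meas n) (fun i j hij ω => hgn_mono i j hij ω)]
      exact lintegral_congr fun ω => (hgn_sup ω).symm
    rw [l1, l3]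
    exact iSup_congr fun n => (l2 n).trans (hint n)
  have hD'1 : IsCondExpNN R (mAt t) g D' :=
    ⟨hD'meas, fun A hA => key A (mAt_le_top t A hA) fun n => (hE1 n).2 A hA⟩
  have hD'2 : IsCondExpNN R (mUpTo t) g D' :=
    ⟨hD'meas.mono (mAt_le_mUpTo le_rfl) le_rfl,
      fun A hA => key A (mUpTo_le_top t A hA) fun n => (hE2 n).2 A hA⟩
  have hDD' : D =ᵐ[R] D' := isCondExpNN_ae_eq' (R := R) (mAt_le_top t) hD hD'1
  refine ⟨hD.1.mono (mAt_le_mUpTo le_rfl) le_rfl, fun A hA => ?_⟩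
  rw [lintegral_congr_ae (ae_restrict_of_ae hDD'), hD'2.2 A hA]

lemma markov_reverse (hR : IsMarkovMeasure R) (s : Icc (0:ℝ) 1)
    {a Ca : PathSpace X → ENNReal} (ha : Measurable[mUpTo s] a)
    (hCa : IsCondExpNN R (mAt s) a Ca) : IsCondExpNN R (mFrom s) a Ca := by
  haveI : SigmaFinite (R.trim (mAt_le_top (X := X) s)) := sigmaFinite_trim_mAt hR.1 s
  have ham : Measurable a := ha.mono (mUpTo_le_top s) le_rfl
  refine ⟨hCa.1.mono (mAt_le_mFrom le_rfl) le_rfl, fun B hB => ?_⟩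
  obtain ⟨CB, hCB⟩ := exists_condExpNN_indicator' (m := mAt s) (R := R) (mAt_le_top s)
    (mFrom_le_top s B hB)
  have hCB' := hR.2 s B hB CB hCB
  have hBm : Measurable (B.indicator fun _ => (1 : ENNReal)) :=
    measurable_const.indicator (mFrom_le_top s B hB)
  calc ∫⁻ ω in B, Ca ω ∂ R
      = ∫⁻ ω, Ca ω * B.indicator (fun _ => 1) ω ∂ R :=
        setLIntegral_eq_lintegral_mul_indicator' (mFrom_le_top s B hB) Ca
    _ = ∫⁻ ω, Ca ω * CB ω ∂ R :=
        (condExpNN_lintegral_mul (mAt_le_top s) hBm hCB hCa.1).symm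
    _ = ∫⁻ ω, CB ω * Ca ω ∂ R := by
        exact lintegral_congr fun ω => mul_comm _ _
    _ = ∫⁻ ω, CB ω * a ω ∂ R :=
        condExpNN_lintegral_mul (mAt_le_top s) ham hCa hCB.1
    _ = ∫⁻ ω, a ω * CB ω ∂ R := by
        exact lintegral_congr fun ω => mul_comm _ _
    _ = ∫⁻ ω, a ω * B.indicator (fun _ => 1) ω ∂ R :=
        condExpNN_lintegral_mul (mUpTo_le_top s) hBm hCB' ha
    _ = ∫⁻ ω in B, a ω ∂ R :=
        (setLIntegral_eq_lintegral_mul_indicator' (mFrom_le_top s B hB) a).symm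

end PathAux

/-- Lemma (Léonard, Lemma 3.2-(1)). Let `R` be a Markov measure, `0 ≤ s ≤ t ≤ 1`, `α` a
nonnegative `σ(X_{[0,s]})`-measurable function and `β` a nonnegative
`σ(X_{[t,1]})`-measurable function. Then, `R`-almost everywhere: if
`E_R(αβ|X_{[s,t]}) = 0` then `E_R(α|X_s) = 0` or `E_R(β|X_t) = 0`; and if
`E_R(αβ|X_{[s,t]}) > 0` then `E_R(α|X_s) > 0`, `E_R(β|X_t) > 0` and
`E_R(αβ|X_{[s,t]}) = E_R(α|X_s)·E_R(β|X_t) ∈ (0,∞]`. -/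
theorem markov_condexp_product_two_times
    {X : Type*} [TopologicalSpace X] [MeasurableSpace X] [PolishSpace X] [BorelSpace X]
    (R : Measure (PathSpace X)) (hR : IsMarkovMeasure R)
    (s t : Icc (0:ℝ) 1) (hst : s ≤ t) (α β : PathSpace X → ENNReal)
    (hα : Measurable[mUpTo s] α) (hβ : Measurable[mFrom t] β)
    (hαfin : ∀ ω, α ω ≠ ⊤) (hβfin : ∀ ω, β ω ≠ ⊤)
    (Cαβ Cα Cβ : PathSpace X → ENNReal)
    (hαβ : IsCondExpNN R (mBetween s t) (fun ω => α ω * β ω) Cαβ)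
    (hCα : IsCondExpNN R (mAt s) α Cα) (hCβ : IsCondExpNN R (mAt t) β Cβ) :
    ∀ᵐ ω ∂ R,
      (Cαβ ω = 0 → Cα ω = 0 ∨ Cβ ω = 0) ∧
      (0 < Cαβ ω → 0 < Cα ω ∧ 0 < Cβ ω ∧ Cαβ ω = Cα ω * Cβ ω) := by
  have hst' : s ≤ t := hst
  haveI hsf_s : SigmaFinite (R.trim (mAt_le_top (X := X) s)) := sigmaFinite_trim_mAt hR.1 s
  haveI hsf_B : SigmaFinite (R.trim (mBetween_le_top (X := X) s t)) := by
    refine @sigmaFiniteTrim_mono _ (mBetween s t) (mAt s) _ R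
      (mBetween_le_top s t) (mAt_le_mBetween le_rfl hst) ?_
    exact sigmaFinite_trim_mAt hR.1 s
  have ham : Measurable α := hα.mono (mUpTo_le_top s) le_rfl
  have hbm : Measurable β := hβ.mono (mFrom_le_top t) le_rfl
  have hCβup : IsCondExpNN R (mUpTo t) β Cβ := markov_upgrade hR t hβ hCβ
  have hCαrev : IsCondExpNN R (mFrom s) α Cα := markov_reverse hR s hα hCα
  have hprod : IsCondExpNN R (mBetween s t) (fun ω => α ω * β ω)
      (fun ω => Cα ω * Cβ ω) := by
    refine ⟨(hCα.1.mono (mAt_le_mBetween le_rfl hst) le_rfl).mul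
      (hCβ.1.mono (mAt_le_mBetween hst le_rfl) le_rfl), fun A hA => ?_⟩
    have hA' : MeasurableSet A := mBetween_le_top s t A hA
    have hCβm : Measurable Cβ := hCβ.1.mono (mAt_le_top t) le_rfl
    have hCαm : Measurable Cα := hCα.1.mono (mAt_le_top s) le_rfl
    have hf1 : Measurable[mUpTo t] fun ω => A.indicator (fun _ => (1:ENNReal)) ω * α ω := by
      exact (measurable_const.indicator (mBetween_le_mUpTo s t A hA)).mul
        (hα.mono (mUpTo_mono hst) le_rfl)
    have hf2 : Measurable[mFrom s] fun ω => A.indicator (fun _ => (1:ENNReal)) ω * Cβ ω := by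
      exact (measurable_const.indicator (mBetween_le_mFrom s t A hA)).mul
        (hCβ.1.mono (mAt_le_mFrom hst) le_rfl)
    calc ∫⁻ ω in A, Cα ω * Cβ ω ∂ R
        = ∫⁻ ω, (Cα ω * Cβ ω) * A.indicator (fun _ => 1) ω ∂ R :=
          setLIntegral_eq_lintegral_mul_indicator' hA' _
      _ = ∫⁻ ω, (A.indicator (fun _ => 1) ω * Cβ ω) * Cα ω ∂ R := by
          exact lintegral_congr fun ω => by ring
      _ = ∫⁻ ω, (A.indicator (fun _ => 1) ω * Cβ ω) * α ω ∂ R :=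
          condExpNN_lintegral_mul (mFrom_le_top s) ham hCαrev hf2
      _ = ∫⁻ ω, (A.indicator (fun _ => 1) ω * α ω) * Cβ ω ∂ R := by
          exact lintegral_congr fun ω => by ring
      _ = ∫⁻ ω, (A.indicator (fun _ => 1) ω * α ω) * β ω ∂ R :=
          condExpNN_lintegral_mul (mUpTo_le_top t) hbm hCβup hf1
      _ = ∫⁻ ω, (α ω * β ω) * A.indicator (fun _ => 1) ω ∂ R := by
          exact lintegral_congr fun ω => by ring
      _ = ∫⁻ ω in A, α ω * β ω ∂ R :=
          (setLIntegral_eq_lintegral_mul_indicator' hA' _).symm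
  have heq : Cαβ =ᵐ[R] fun ω => Cα ω * Cβ ω :=
    isCondExpNN_ae_eq' (R := R) (mBetween_le_top s t) hαβ hprod
  filter_upwards [heq] with ω hω
  constructor
  · intro h0
    rw [hω] at h0
    exact mul_eq_zero.mp h0
  · intro hpos
    rw [hω] at hpos ⊢
    have h1 : Cα ω ≠ 0 := fun h => by simp [h] at hpos
    have h2 : Cβ ω ≠ 0 := fun h => by simp [h] at hpos
    exact ⟨pos_iff_ne_zero.mpr h1, pos_iff_ne_zero.mpr h2, rfl⟩
end
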